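/- arXiv:2301.02746 — 6 statements merged into one kernel-verified Lean document; each statement's English description precedes it below -/
import Mathlib

section
/- Let S be a free open set in g matrix variables and let f be a free analytic function on S. Then f respects intertwinings: whenever X ∈ S[n], Y ∈ S[m], and Γ is an m×n complex matrix satisfying Γ X_j = Y_j Γ for j = 1,…,g, one has Γ f[n](X) = f[m](Y) Γ. -/
open scoped ComplexOrder Kronecker Matrix Matrix.Norms.L2Operator

noncomputable section

/-- Square complex matrices of size `n`. -/
abbrev Mat (n : ℕ) : Type := Matrix (Fin n) (Fin n) ℂ

/-- Assemble a `k × k` array of matrices into a single block matrix. -/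
def blockMat {k : ℕ} {α β : Type*} (M : Fin k → Fin k → Matrix α β ℂ) :
    Matrix (Fin k × α) (Fin k × β) ℂ :=
  Matrix.of fun p q => M p.1 q.1 p.2 q.2

/-- Direct sum of two square matrices. -/
def dsum {n m : ℕ} (X : Mat n) (Y : Mat m) : Mat (n + m) :=
  (Matrix.fromBlocks X 0 0 Y).submatrix finSumFinEquiv.symm finSumFinEquiv.symm

/-- Embed a rectangular matrix `Γ` as the lower-left block of a square matrix of
size `n + m`, all other blocks being zero. -/
def lowEmbed {n m : ℕ} (Γ : Matrix (Fin m) (Fin n) ℂ) : Mat (n + m) :=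
  (Matrix.fromBlocks 0 0 Γ 0).submatrix finSumFinEquiv.symm finSumFinEquiv.symm

lemma submatrix_equiv_inj {l o p q : Type*} {α : Type*} (e : l ≃ o) (f : p ≃ q)
    {M M' : Matrix o q α} (h : M.submatrix ⇑e ⇑f = M'.submatrix ⇑e ⇑f) : M = M' := by
  ext i j
  have := congrFun (congrFun h (e.symm i)) (f.symm j)
  simpa using this

lemma lowEmbed_mul_dsum {n m : ℕ} (Γ : Matrix (Fin m) (Fin n) ℂ) (A : Mat n) (B : Mat m) :
    lowEmbed Γ * dsum A B = lowEmbed (Γ * A) := by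
  unfold lowEmbed dsum
  rw [Matrix.submatrix_mul_equiv, Matrix.fromBlocks_multiply]
  simp

lemma dsum_mul_lowEmbed {n m : ℕ} (Γ : Matrix (Fin m) (Fin n) ℂ) (A : Mat n) (B : Mat m) :
    dsum A B * lowEmbed Γ = lowEmbed (B * Γ) := by
  unfold lowEmbed dsum
  rw [Matrix.submatrix_mul_equiv, Matrix.fromBlocks_multiply]
  simp

lemma lowEmbed_inj {n m : ℕ} {Γ₁ Γ₂ : Matrix (Fin m) (Fin n) ℂ}
    (h : lowEmbed Γ₁ = lowEmbed Γ₂) : Γ₁ = Γ₂ := by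
  unfold lowEmbed at h
  have h2 := submatrix_equiv_inj finSumFinEquiv.symm finSumFinEquiv.symm h
  have := congrArg Matrix.toBlocks₂₁ h2
  simpa [Matrix.toBlocks_fromBlocks₂₁] using this

/-- Every matrix decomposes as `K₁ + i K₂` with `K₁, K₂` skew-Hermitian. -/
lemma skew_decomp {k : ℕ} (M : Mat k) :
    ∃ K₁ K₂ : Mat k, K₁ᴴ = -K₁ ∧ K₂ᴴ = -K₂ ∧ M = K₁ + Complex.I • K₂ := by
  refine ⟨((1:ℂ)/2) • (M - Mᴴ), (-(Complex.I)/2) • (M + Mᴴ), ?_, ?_, ?_⟩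
  · rw [Matrix.conjTranspose_smul, Matrix.conjTranspose_sub, Matrix.conjTranspose_conjTranspose,
      show star ((1:ℂ)/2) = (1:ℂ)/2 by norm_num, ← smul_neg, neg_sub]
  · rw [Matrix.conjTranspose_smul, Matrix.conjTranspose_add, Matrix.conjTranspose_conjTranspose,
      show star (-(Complex.I)/2) = Complex.I/2 by simp [Complex.star_def], add_comm Mᴴ M,
      ← neg_smul]
    congr 1; ring
  · rw [smul_smul, show Complex.I * (-(Complex.I)/2) = (1:ℂ)/2 by
      linear_combination (-(1:ℂ)/2) * Complex.I_mul_I]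
    module

lemma exp_real_smul_conjTranspose {k : ℕ} {K : Mat k} (hK : Kᴴ = -K) (s : ℝ) :
    (NormedSpace.exp ((s:ℂ) • K))ᴴ = NormedSpace.exp ((s:ℂ) • -K) := by
  rw [← Matrix.exp_conjTranspose, Matrix.conjTranspose_smul, hK, Complex.star_def,
    Complex.conj_ofReal]

lemma exp_skew_unitary {k : ℕ} {K : Mat k} (hK : Kᴴ = -K) (s : ℝ) :
    NormedSpace.exp ((s:ℂ) • K) ∈ Matrix.unitaryGroup (Fin k) ℂ := by
  rw [Matrix.mem_unitaryGroup_iff']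
  have hstar : star (NormedSpace.exp ((s:ℂ) • K)) = NormedSpace.exp ((s:ℂ) • -K) :=
    exp_real_smul_conjTranspose hK s
  rw [hstar, ← Matrix.exp_add_of_commute]
  · simp
  · simpa [smul_neg] using (Commute.refl ((s:ℂ) • K)).neg_left

/-- Derivative at `0` of `s ↦ e^{-sK} A e^{sK}`. -/
lemma hasDerivAt_conjExp {k : ℕ} (K A : Mat k) :
    HasDerivAt (fun s : ℝ => NormedSpace.exp ((s:ℂ) • -K) * A * NormedSpace.exp ((s:ℂ) • K))
      (A * K - K * A) 0 := by
  have h1 : HasDerivAt (fun u : ℂ => NormedSpace.exp (u • -K)) (-K) 0 := by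
    simpa using hasDerivAt_exp_smul_const (𝕂 := ℂ) (-K) (0 : ℂ)
  have h2 : HasDerivAt (fun u : ℂ => NormedSpace.exp (u • K)) K 0 := by
    simpa using hasDerivAt_exp_smul_const (𝕂 := ℂ) K (0 : ℂ)
  have h3 := (h1.mul_const A).mul h2
  have h4 : HasDerivAt (fun u : ℂ => NormedSpace.exp (u • -K) * A * NormedSpace.exp (u • K))
      (A * K - K * A) (((0:ℝ) : ℂ)) := by
    rw [Complex.ofReal_zero]
    refine HasDerivAt.congr_deriv h3 ?_
    simp
    noncomm_ring
  have h5 := HasDerivAt.scomp (0:ℝ) h4 Complex.ofRealCLM.hasDerivAt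
  simpa [Function.comp_def] using h5

/-- Proposition 1.2: a free analytic function on a free open set respects intertwinings. -/
theorem free_analytic_respects_intertwinings {g : ℕ} (hg : 0 < g)
    (S : ∀ n, Set (Fin g → Mat n))
    (hSopen : ∀ n, IsOpen (S n))
    (hSdsum : ∀ {n m : ℕ} (X : Fin g → Mat n) (Y : Fin g → Mat m),
      X ∈ S n → Y ∈ S m → (fun j => dsum (X j) (Y j)) ∈ S (n + m))
    (hSuni : ∀ {n : ℕ} (X : Fin g → Mat n) (U : Mat n),
      X ∈ S n → U ∈ Matrix.unitaryGroup (Fin n) ℂ → (fun j => Uᴴ * X j * U) ∈ S n)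
    (f : ∀ n, (Fin g → Mat n) → Mat n)
    (hfa : ∀ n, AnalyticOnNhd ℂ (f n) (S n))
    (hfdsum : ∀ {n m : ℕ} (X : Fin g → Mat n) (Y : Fin g → Mat m),
      X ∈ S n → Y ∈ S m →
        f (n + m) (fun j => dsum (X j) (Y j)) = dsum (f n X) (f m Y))
    (hfuni : ∀ {n : ℕ} (X : Fin g → Mat n) (U : Mat n),
      X ∈ S n → U ∈ Matrix.unitaryGroup (Fin n) ℂ →
        f n (fun j => Uᴴ * X j * U) = Uᴴ * f n X * U)
    {n m : ℕ} (X : Fin g → Mat n) (Y : Fin g → Mat m)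
    (hX : X ∈ S n) (hY : Y ∈ S m)
    (Γ : Matrix (Fin m) (Fin n) ℂ) (hΓ : ∀ j, Γ * X j = Y j * Γ) :
    Γ * f n X = f m Y * Γ := by
  classical
  set Z : Fin g → Mat (n + m) := fun j => dsum (X j) (Y j) with hZdef
  have hZS : Z ∈ S (n + m) := hSdsum X Y hX hY
  set F : (Fin g → Mat (n + m)) → Mat (n + m) := f (n + m) with hFdef
  have hdiff : DifferentiableAt ℂ F Z := (hfa (n + m) Z hZS).differentiableAt
  set D := fderiv ℂ F Z with hDdef
  have hDF : HasFDerivAt F D Z := hdiff.hasFDerivAt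
  -- Key identity for skew-Hermitian directions
  have key : ∀ K : Mat (n + m), Kᴴ = -K →
      D (fun j => Z j * K - K * Z j) = F Z * K - K * F Z := by
    intro K hK
    have hfun : ∀ s : ℝ,
        F (fun j => NormedSpace.exp ((s:ℂ) • -K) * Z j * NormedSpace.exp ((s:ℂ) • K))
          = NormedSpace.exp ((s:ℂ) • -K) * F Z * NormedSpace.exp ((s:ℂ) • K) := by
      intro s
      have h := hfuni Z (NormedSpace.exp ((s:ℂ) • K)) hZS (exp_skew_unitary hK s)
      rwa [exp_real_smul_conjTranspose hK s] at h
    have hγ : HasDerivAt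
        (fun s : ℝ => (fun j => NormedSpace.exp ((s:ℂ) • -K) * Z j
          * NormedSpace.exp ((s:ℂ) • K)))
        (fun j => Z j * K - K * Z j) 0 :=
      hasDerivAt_pi.2 fun j => hasDerivAt_conjExp K (Z j)
    have hγ0 : (fun j => NormedSpace.exp (((0:ℝ):ℂ) • -K) * Z j
        * NormedSpace.exp (((0:ℝ):ℂ) • K)) = Z := by
      funext j; simp
    have hFat : HasFDerivAt F (D.restrictScalars ℝ)
        (fun j => NormedSpace.exp (((0:ℝ):ℂ) • -K) * Z j
          * NormedSpace.exp (((0:ℝ):ℂ) • K)) := by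
      rw [hγ0]; exact hDF.restrictScalars ℝ
    have hL := hFat.comp_hasDerivAt (0:ℝ) hγ
    have hR : HasDerivAt
        (fun s : ℝ => NormedSpace.exp ((s:ℂ) • -K) * F Z * NormedSpace.exp ((s:ℂ) • K))
        (F Z * K - K * F Z) 0 := hasDerivAt_conjExp K (F Z)
    have hL' : HasDerivAt
        (fun s : ℝ => NormedSpace.exp ((s:ℂ) • -K) * F Z * NormedSpace.exp ((s:ℂ) • K))
        (D.restrictScalars ℝ (fun j => Z j * K - K * Z j)) 0 :=
      hL.congr_of_eventuallyEq (Filter.Eventually.of_forall fun s => (hfun s).symm)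
    exact hL'.unique hR
  -- Extend to arbitrary directions by ℂ-linearity
  have key' : ∀ M : Mat (n + m),
      D (fun j => Z j * M - M * Z j) = F Z * M - M * F Z := by
    intro M
    obtain ⟨K₁, K₂, hs1, hs2, hMsum⟩ := skew_decomp M
    have hdir : (fun j => Z j * M - M * Z j)
        = (fun j => Z j * K₁ - K₁ * Z j) + Complex.I • (fun j => Z j * K₂ - K₂ * Z j) := by
      funext j
      simp only [Pi.add_apply, Pi.smul_apply]
      rw [hMsum]
      simp only [mul_add, add_mul, mul_smul_comm, smul_mul_assoc, smul_sub]
      abel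
    rw [hdir, map_add, map_smul, key K₁ hs1, key K₂ hs2, hMsum]
    simp only [mul_add, add_mul, mul_smul_comm, smul_mul_assoc, smul_sub]
    abel
  -- Apply to the intertwiner
  have hNZ : ∀ j, Z j * lowEmbed Γ - lowEmbed Γ * Z j = 0 := by
    intro j
    show dsum (X j) (Y j) * lowEmbed Γ - lowEmbed Γ * dsum (X j) (Y j) = 0
    rw [dsum_mul_lowEmbed, lowEmbed_mul_dsum, hΓ j, sub_self]
  have h0 : D (fun j => Z j * lowEmbed Γ - lowEmbed Γ * Z j) = 0 := by
    have hz : (fun j => Z j * lowEmbed Γ - lowEmbed Γ * Z j) = 0 := funext hNZ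
    rw [hz, map_zero]
  have hcomm : F Z * lowEmbed Γ - lowEmbed Γ * F Z = 0 := by
    rw [← key' (lowEmbed Γ), h0]
  have hFZ : F Z = dsum (f n X) (f m Y) := hfdsum X Y hX hY
  rw [hFZ, dsum_mul_lowEmbed, lowEmbed_mul_dsum, sub_eq_zero] at hcomm
  exact (lowEmbed_inj hcomm).symm
end
end

section
/- Let A be a g-tuple of d×d complex matrices. The following are equivalent: (i) D_A is a spectraball, i.e., there exist d', e' and a g-tuple G of d'×e' complex matrices with D_A[n] = B_G[n] for all n; (ii) for every n, every X ∈ D_A[n], and every n×n unitary matrix U, the tuple UX = (UX₁,…,UX_g) belongs to D_A[n]; (iii) for every n, D_A[n] = {X ∈ Mₙ(ℂ)^g : ‖Σ_j A_j ⊗ X_j‖ < 1}. -/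
open scoped ComplexOrder Kronecker Matrix Matrix.Norms.L2Operator

noncomputable section

/-- The pencil `L_A(X)` of a free spectrahedron determined by a `g`-tuple `A`. -/
def LpenA {g d n : ℕ} (A : Fin g → Matrix (Fin d) (Fin d) ℂ) (X : Fin g → Mat n) :
    Matrix (Fin d × Fin n) (Fin d × Fin n) ℂ :=
  1 + (∑ j, A j ⊗ₖ X j) + ∑ j, (A j)ᴴ ⊗ₖ (X j)ᴴ

/-- The free spectrahedron `D_A` at level `n`. -/
def DAset {g d : ℕ} (A : Fin g → Matrix (Fin d) (Fin d) ℂ) (n : ℕ) :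
    Set (Fin g → Mat n) := {X | (LpenA A X).PosDef}

set_option linter.unusedSectionVars false

namespace SpecBall
open Matrix
variable {g d : ℕ}






/-- conjTranspose of a Kronecker product. -/
theorem kron_ct {l m p q : Type*} (A : Matrix l m ℂ) (B : Matrix p q ℂ) :
    (A ⊗ₖ B)ᴴ = Aᴴ ⊗ₖ Bᴴ := by
  ext ⟨i, a⟩ ⟨i', a'⟩
  simp [Matrix.conjTranspose_apply, Matrix.kroneckerMap_apply, mul_comm]

/-- Positive definiteness is preserved under congruence by an injective map. -/
theorem posDef_conj {m m' : Type*} [Fintype m] [Fintype m'] {M : Matrix m' m' ℂ}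
    (hM : M.PosDef) (V : Matrix m' m ℂ) (hV : ∀ x, V *ᵥ x = 0 → x = 0) :
    (Vᴴ * M * V).PosDef := by
  rw [Matrix.posDef_iff_dotProduct_mulVec]
  constructor
  · have h1 := hM.1
    unfold Matrix.IsHermitian at h1 ⊢
    rw [Matrix.conjTranspose_mul, Matrix.conjTranspose_mul, Matrix.conjTranspose_conjTranspose,
      h1, Matrix.mul_assoc]
  · intro x hx
    have key : star x ⬝ᵥ (Vᴴ * M * V) *ᵥ x = star (V *ᵥ x) ⬝ᵥ M *ᵥ (V *ᵥ x) := by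
      rw [show Vᴴ * M * V = Vᴴ * (M * V) from Matrix.mul_assoc _ _ _, ← Matrix.mulVec_mulVec,
        Matrix.dotProduct_mulVec (star x) Vᴴ, ← Matrix.star_mulVec, ← Matrix.mulVec_mulVec]
    rw [key]
    exact hM.dotProduct_mulVec_pos fun h => hx (hV x h)




/-- The inclusion matrix of an injection. -/
def incl {s t : Type*} [DecidableEq s] (f : t → s) : Matrix s t ℂ :=
  Matrix.of fun p q => if p = f q then 1 else 0

theorem incl_conjTranspose_apply {s t : Type*} [DecidableEq s] (f : t → s) (q : t) (p : s) :
    (incl f)ᴴ q p = if p = f q then 1 else 0 := by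
  simp only [Matrix.conjTranspose_apply, incl, Matrix.of_apply]
  split <;> simp

theorem incl_conjTranspose_mul_incl {s t : Type*} [Fintype s] [Fintype t] [DecidableEq s]
    [DecidableEq t] {f : t → s} (hf : Function.Injective f) :
    (incl f)ᴴ * incl f = 1 := by
  ext q q'
  rw [Matrix.mul_apply]
  rw [Finset.sum_eq_single (f q)]
  · rw [incl_conjTranspose_apply, if_pos rfl, one_mul]
    simp only [incl, Matrix.of_apply, Matrix.one_apply, hf.eq_iff]
  · intro b _ hb
    rw [incl_conjTranspose_apply, if_neg hb, zero_mul]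
  · simp

theorem incl_conj {s t : Type*} [Fintype s] [Fintype t] [DecidableEq s]
    (f : t → s) (N : Matrix s s ℂ) :
    (incl f)ᴴ * N * incl f = N.submatrix f f := by
  ext q q'
  rw [Matrix.mul_apply]
  rw [Finset.sum_eq_single (f q')]
  · rw [Matrix.mul_apply, Finset.sum_eq_single (f q)]
    · simp [incl_conjTranspose_apply, incl]
    · intro b _ hb
      rw [incl_conjTranspose_apply, if_neg hb, zero_mul]
    · simp
  · intro b _ hb
    rw [show (incl f) b q' = 0 from if_neg hb, mul_zero]
  · simp

theorem incl_mulVec_eq_zero {s t : Type*} [Fintype s] [Fintype t] [DecidableEq s]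
    {f : t → s} (hf : Function.Injective f) (x : t → ℂ) (hx : incl f *ᵥ x = 0) : x = 0 := by
  funext q
  have h := congrFun hx (f q)
  rw [Matrix.mulVec, dotProduct, Finset.sum_eq_single q] at h
  · simpa [incl] using h
  · intro b _ hb
    rw [show (incl f) (f q) b = 0 from if_neg (fun hh => hb (hf hh).symm), zero_mul]
  · simp





/-- The pencil over a general index type. -/
def Lg (A : Fin g → Matrix (Fin d) (Fin d) ℂ) {m : Type*} [Fintype m] [DecidableEq m]
    (X : Fin g → Matrix m m ℂ) : Matrix (Fin d × m) (Fin d × m) ℂ :=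
  1 + (∑ j, A j ⊗ₖ X j) + ∑ j, (A j)ᴴ ⊗ₖ (X j)ᴴ

def Dg (A : Fin g → Matrix (Fin d) (Fin d) ℂ) {m : Type*} [Fintype m] [DecidableEq m]
    (X : Fin g → Matrix m m ℂ) : Prop := (Lg A X).PosDef

/-- conjTranspose of a Kronecker product. -/
theorem Lg_conj {m m' : Type*} [Fintype m] [DecidableEq m] [Fintype m'] [DecidableEq m']
    (A : Fin g → Matrix (Fin d) (Fin d) ℂ) (Y : Fin g → Matrix m' m' ℂ)
    (V : Matrix m' m ℂ) (hV : Vᴴ * V = 1) :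
    Lg A (fun j => Vᴴ * Y j * V) = ((1 : Matrix (Fin d) (Fin d) ℂ) ⊗ₖ V)ᴴ * Lg A Y *
      ((1 : Matrix (Fin d) (Fin d) ℂ) ⊗ₖ V) := by
  have hW : ((1 : Matrix (Fin d) (Fin d) ℂ) ⊗ₖ V)ᴴ = (1 : Matrix (Fin d) (Fin d) ℂ) ⊗ₖ Vᴴ := by
    rw [kron_ct, Matrix.conjTranspose_one]
  rw [hW]
  unfold Lg
  dsimp only
  rw [Matrix.mul_add, Matrix.mul_add, Matrix.add_mul, Matrix.add_mul]
  congr 2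
  · rw [Matrix.mul_one, ← Matrix.mul_kronecker_mul, Matrix.one_mul, ← Matrix.one_kronecker_one
      (α := ℂ) (m := Fin d) (n := m), hV]
  · rw [Matrix.mul_sum, Matrix.sum_mul]
    refine Finset.sum_congr rfl fun j _ => ?_
    rw [← Matrix.mul_kronecker_mul, ← Matrix.mul_kronecker_mul, Matrix.one_mul, Matrix.mul_one,
      Matrix.mul_assoc]
  · rw [Matrix.mul_sum, Matrix.sum_mul]
    refine Finset.sum_congr rfl fun j _ => ?_
    rw [← Matrix.mul_kronecker_mul, ← Matrix.mul_kronecker_mul, Matrix.one_mul, Matrix.mul_one]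
    rw [Matrix.conjTranspose_mul, Matrix.conjTranspose_mul, Matrix.conjTranspose_conjTranspose,
      Matrix.mul_assoc]

theorem kron_mulVec_eq_zero {m m' : Type*} [Fintype m] [DecidableEq m] [Fintype m']
    [DecidableEq m'] (V : Matrix m' m ℂ) (hV : Vᴴ * V = 1)
    (x : Fin d × m → ℂ) (hx : ((1 : Matrix (Fin d) (Fin d) ℂ) ⊗ₖ V) *ᵥ x = 0) : x = 0 := by
  have h2 : (((1 : Matrix (Fin d) (Fin d) ℂ) ⊗ₖ V)ᴴ * ((1 : Matrix (Fin d) (Fin d) ℂ) ⊗ₖ V))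
      = 1 := by
    rw [kron_ct, Matrix.conjTranspose_one, ← Matrix.mul_kronecker_mul, Matrix.one_mul, hV,
      Matrix.one_kronecker_one]
  calc x = (((1 : Matrix (Fin d) (Fin d) ℂ) ⊗ₖ V)ᴴ * ((1 : Matrix (Fin d) (Fin d) ℂ) ⊗ₖ V)) *ᵥ x
        := by rw [h2, Matrix.one_mulVec]
    _ = 0 := by rw [← Matrix.mulVec_mulVec, hx, Matrix.mulVec_zero]


theorem Dg_conj {m m' : Type*} [Fintype m] [DecidableEq m] [Fintype m'] [DecidableEq m']
    {A : Fin g → Matrix (Fin d) (Fin d) ℂ} {Y : Fin g → Matrix m' m' ℂ} (hY : Dg A Y)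
    (V : Matrix m' m ℂ) (hV : Vᴴ * V = 1) : Dg A (fun j => Vᴴ * Y j * V) := by
  unfold Dg
  rw [Lg_conj A Y V hV]
  exact posDef_conj hY _ (kron_mulVec_eq_zero V hV)

theorem Dg_submatrix {m m' : Type*} [Fintype m] [DecidableEq m] [Fintype m'] [DecidableEq m']
    {A : Fin g → Matrix (Fin d) (Fin d) ℂ} {Y : Fin g → Matrix m' m' ℂ} (hY : Dg A Y)
    {f : m → m'} (hf : Function.Injective f) : Dg A (fun j => (Y j).submatrix f f) := by
  have h := Dg_conj hY (incl f) (incl_conjTranspose_mul_incl hf)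
  simpa only [incl_conj] using h

theorem mem_DAset_iff_Dg {A : Fin g → Matrix (Fin d) (Fin d) ℂ} {n : ℕ} (X : Fin g → Mat n) :
    X ∈ DAset A n ↔ Dg A X := Iff.rfl

theorem Dg_unitary {A : Fin g → Matrix (Fin d) (Fin d) ℂ}
    (h2 : ∀ (n : ℕ), ∀ X ∈ DAset A n, ∀ U ∈ Matrix.unitaryGroup (Fin n) ℂ,
      (fun j => U * X j) ∈ DAset A n)
    {m : Type*} [Fintype m] [DecidableEq m] (X : Fin g → Matrix m m ℂ) (hX : Dg A X)
    (U : Matrix m m ℂ) (hU : U * Uᴴ = 1) : Dg A (fun j => U * X j) := by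
  classical
  set e := Fintype.equivFin m with he
  set X' : Fin g → Mat (Fintype.card m) := fun j => (X j).submatrix e.symm e.symm with hX'def
  have hX' : X' ∈ DAset A (Fintype.card m) :=
    (mem_DAset_iff_Dg X').mpr (Dg_submatrix hX e.symm.injective)
  set U' : Mat (Fintype.card m) := U.submatrix e.symm e.symm with hU'def
  have hU' : U' ∈ Matrix.unitaryGroup (Fin (Fintype.card m)) ℂ := by
    rw [Matrix.mem_unitaryGroup_iff]
    rw [Matrix.star_eq_conjTranspose, hU'def, Matrix.conjTranspose_submatrix,
      Matrix.submatrix_mul_equiv, hU, Matrix.submatrix_one_equiv]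
  have h := h2 (Fintype.card m) X' hX' U' hU'
  have hDg : Dg A (fun j => U' * X' j) := (mem_DAset_iff_Dg _).mp h
  have hcompute : ∀ j, (U' * X' j).submatrix e e = U * X j := by
    intro j
    rw [hU'def, hX'def]
    dsimp only
    rw [Matrix.submatrix_mul_equiv, Matrix.submatrix_submatrix]
    rw [Equiv.symm_comp_self, Matrix.submatrix_id_id]
  have := Dg_submatrix hDg (f := ⇑e) e.injective
  simpa only [hcompute] using this

/-- The distribution equivalence used to reshuffle block pencils. -/
def pe (d : ℕ) (m m' : Type*) : (Fin d × (m ⊕ m')) ≃ ((Fin d × m) ⊕ (Fin d × m')) where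
  toFun p := match p with
    | (i, Sum.inl a) => Sum.inl (i, a)
    | (i, Sum.inr a) => Sum.inr (i, a)
  invFun q := match q with
    | Sum.inl (i, a) => (i, Sum.inl a)
    | Sum.inr (i, a) => (i, Sum.inr a)
  left_inv := by rintro ⟨i, a | a⟩ <;> rfl
  right_inv := by rintro (⟨i, a⟩ | ⟨i, a⟩) <;> rfl

theorem Lg_fromBlocks {m m' : Type*} [Fintype m] [DecidableEq m] [Fintype m'] [DecidableEq m']
    (A : Fin g → Matrix (Fin d) (Fin d) ℂ) (P : Fin g → Matrix m m ℂ)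
    (Q : Fin g → Matrix m m' ℂ) (R : Fin g → Matrix m' m ℂ) (S : Fin g → Matrix m' m' ℂ) :
    Lg A (fun j => Matrix.fromBlocks (P j) (Q j) (R j) (S j)) =
      (Matrix.fromBlocks (Lg A P)
        ((∑ j, A j ⊗ₖ Q j) + ∑ j, (A j)ᴴ ⊗ₖ (R j)ᴴ)
        ((∑ j, A j ⊗ₖ R j) + ∑ j, (A j)ᴴ ⊗ₖ (Q j)ᴴ)
        (Lg A S)).submatrix (pe d m m') (pe d m m') := by
  ext ⟨i, ab⟩ ⟨i', ab'⟩
  rcases ab with a | a <;> rcases ab' with a' | a' <;>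
    simp [Lg, pe, Matrix.submatrix_apply, Matrix.add_apply, Matrix.sum_apply,
      Matrix.kroneckerMap_apply, Matrix.one_apply, Matrix.conjTranspose_apply,
      Prod.ext_iff, Matrix.fromBlocks_apply₁₁, Matrix.fromBlocks_apply₁₂,
      Matrix.fromBlocks_apply₂₁, Matrix.fromBlocks_apply₂₂, Equiv.coe_fn_mk]

theorem posDef_fromBlocks_diag {s t : Type*} [Fintype s] [Fintype t] [DecidableEq s]
    [DecidableEq t] {L1 : Matrix s s ℂ} {L2 : Matrix t t ℂ} (h1 : L1.PosDef)
    (h2 : L2.PosDef) : (Matrix.fromBlocks L1 0 0 L2).PosDef := by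
  rw [Matrix.posDef_iff_dotProduct_mulVec]
  constructor
  · unfold Matrix.IsHermitian
    rw [Matrix.fromBlocks_conjTranspose, Matrix.conjTranspose_zero,
      Matrix.conjTranspose_zero, h1.1, h2.1]
  · intro x hx
    have hsplit : x = Sum.elim (x ∘ Sum.inl) (x ∘ Sum.inr) := (Sum.elim_comp_inl_inr x).symm
    have hstar : star x = Sum.elim (star (x ∘ Sum.inl)) (star (x ∘ Sum.inr)) := by
      funext i; cases i <;> rfl
    rw [Matrix.fromBlocks_mulVec, hstar, sumElim_dotProduct_sumElim,
      Matrix.zero_mulVec, Matrix.zero_mulVec, add_zero, zero_add]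
    by_cases h1' : x ∘ Sum.inl = 0
    · have h2' : x ∘ Sum.inr ≠ 0 := by
        intro hh
        exact hx (by rw [hsplit, h1', hh]; ext i; cases i <;> rfl)
      have : star (x ∘ Sum.inl) ⬝ᵥ L1 *ᵥ (x ∘ Sum.inl) = 0 := by
        rw [h1']; simp
      rw [this, zero_add]
      exact h2.dotProduct_mulVec_pos h2'
    · exact add_pos_of_pos_of_nonneg (h1.dotProduct_mulVec_pos h1') (h2.posSemidef.dotProduct_mulVec_nonneg _)

theorem posDef_submatrix_inj {s t : Type*} [Fintype s] [Fintype t] [DecidableEq s]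
    [DecidableEq t] {N : Matrix s s ℂ} (hN : N.PosDef) {f : t → s}
    (hf : Function.Injective f) : (N.submatrix f f).PosDef := by
  rw [← incl_conj f N]
  exact posDef_conj hN _ (incl_mulVec_eq_zero hf)

theorem posDef_submatrix_equiv_iff {s t : Type*} [Fintype s] [Fintype t] [DecidableEq s]
    [DecidableEq t] {N : Matrix s s ℂ} (e : t ≃ s) :
    (N.submatrix e e).PosDef ↔ N.PosDef := by
  constructor
  · intro h
    have := posDef_submatrix_inj h e.symm.injective
    simpa [Matrix.submatrix_submatrix, Equiv.self_comp_symm] using this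
  · intro h
    exact posDef_submatrix_inj h e.injective

theorem Dg_fromBlocks_diag {m m' : Type*} [Fintype m] [DecidableEq m] [Fintype m']
    [DecidableEq m'] {A : Fin g → Matrix (Fin d) (Fin d) ℂ} {X : Fin g → Matrix m m ℂ}
    {Z : Fin g → Matrix m' m' ℂ} (hX : Dg A X) (hZ : Dg A Z) :
    Dg A (fun j => Matrix.fromBlocks (X j) 0 0 (Z j)) := by
  unfold Dg
  have h := Lg_fromBlocks A X (fun _ => (0 : Matrix m m' ℂ)) (fun _ => (0 : Matrix m' m ℂ)) Z
  simp only [Matrix.conjTranspose_zero, Matrix.kronecker_zero, Finset.sum_const_zero,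
    add_zero, zero_add] at h
  rw [h]
  exact (posDef_submatrix_equiv_iff (pe d m m')).mpr (posDef_fromBlocks_diag hX hZ)

theorem Dg_offdiag_iff {m : Type*} [Fintype m] [DecidableEq m]
    {A : Fin g → Matrix (Fin d) (Fin d) ℂ} (X : Fin g → Matrix m m ℂ) :
    Dg A (fun j => Matrix.fromBlocks 0 (X j) 0 0) ↔
      (Matrix.fromBlocks 1 (∑ j, A j ⊗ₖ X j) (∑ j, A j ⊗ₖ X j)ᴴ 1).PosDef := by
  unfold Dg
  have h := Lg_fromBlocks A (fun _ => (0 : Matrix m m ℂ)) X (fun _ => (0 : Matrix m m ℂ))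
    (fun _ => (0 : Matrix m m ℂ))
  have hL0 : Lg A (fun _ => (0 : Matrix m m ℂ)) = 1 := by
    unfold Lg
    simp [Matrix.kronecker_zero]
  have hMH : (∑ j, A j ⊗ₖ X j)ᴴ = ∑ j, (A j)ᴴ ⊗ₖ (X j)ᴴ := by
    rw [Matrix.conjTranspose_sum]
    exact Finset.sum_congr rfl fun j _ => kron_ct _ _
  simp only [Matrix.conjTranspose_zero, Matrix.kronecker_zero, Finset.sum_const_zero,
    add_zero, zero_add, hL0] at h
  rw [h, hMH]
  exact posDef_submatrix_equiv_iff (pe d m m)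

section Analytic

variable {K : Type*} [Fintype K] [DecidableEq K]

/-- Abbreviation for passage to Euclidean space. -/
def ev (x : K → ℂ) : EuclideanSpace ℂ K := (WithLp.equiv 2 (K → ℂ)).symm x

theorem star_sum_elim {s t : Type*} (x : s → ℂ) (y : t → ℂ) :
    star (Sum.elim x y) = Sum.elim (star x) (star y) := by
  funext i; cases i <;> rfl

theorem dot_inner (x y : K → ℂ) : star x ⬝ᵥ y = (inner ℂ (ev x) (ev y) : ℂ) := by
  simp [dotProduct, PiLp.inner_apply, RCLike.inner_apply, ev, mul_comm]

theorem dot_self_eq (x : K → ℂ) : star x ⬝ᵥ x = ((‖ev x‖ ^ 2 : ℝ) : ℂ) := by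
  rw [dot_inner, inner_self_eq_norm_sq_to_K]
  norm_cast

theorem ev_mulVec_norm_le (M : Matrix K K ℂ) (y : K → ℂ) :
    ‖ev (M *ᵥ y)‖ ≤ ‖M‖ * ‖ev y‖ :=
  M.l2_opNorm_mulVec (ev y)

theorem quad_fromBlocks_one (M : Matrix K K ℂ) (x y : K → ℂ) :
    star (Sum.elim x y) ⬝ᵥ ((Matrix.fromBlocks 1 M Mᴴ 1) *ᵥ Sum.elim x y)
      = (star x ⬝ᵥ x + star y ⬝ᵥ y)
        + (star x ⬝ᵥ (M *ᵥ y) + star (star x ⬝ᵥ (M *ᵥ y))) := by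
  have hcross : star (star x ⬝ᵥ (M *ᵥ y)) = star y ⬝ᵥ (Mᴴ *ᵥ x) := by
    rw [← Matrix.star_dotProduct, Matrix.star_mulVec, Matrix.dotProduct_mulVec]
  rw [Matrix.fromBlocks_mulVec, star_sum_elim, sumElim_dotProduct_sumElim,
    Sum.elim_comp_inl, Sum.elim_comp_inr, Matrix.one_mulVec, Matrix.one_mulVec,
    dotProduct_add, dotProduct_add, hcross]
  ring

theorem isHermitian_fromBlocks_one (M : Matrix K K ℂ) :
    (Matrix.fromBlocks 1 M Mᴴ 1).IsHermitian := by
  unfold Matrix.IsHermitian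
  rw [Matrix.fromBlocks_conjTranspose, Matrix.conjTranspose_one,
    Matrix.conjTranspose_conjTranspose]

theorem posDef_fromBlocks_one_of_norm_lt (M : Matrix K K ℂ) (h : ‖M‖ < 1) :
    (Matrix.fromBlocks 1 M Mᴴ 1).PosDef := by
  refine Matrix.PosDef.of_dotProduct_mulVec_pos (isHermitian_fromBlocks_one M) ?_
  intro v hv
  have hsplit : v = Sum.elim (v ∘ Sum.inl) (v ∘ Sum.inr) := (Sum.elim_comp_inl_inr v).symm
  set x := v ∘ Sum.inl with hx
  set y := v ∘ Sum.inr with hy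
  rw [hsplit, quad_fromBlocks_one]
  set t := star x ⬝ᵥ (M *ᵥ y) with ht
  set a := ‖ev x‖ with ha
  set b := ‖ev y‖ with hb
  have hM0 : 0 ≤ ‖M‖ := norm_nonneg M
  have ha0 : 0 ≤ a := norm_nonneg _
  have hb0 : 0 ≤ b := norm_nonneg _
  have htabs : ‖t‖ ≤ ‖M‖ * a * b := by
    rw [ht, dot_inner]
    calc ‖(inner ℂ (ev x) (ev (M *ᵥ y)) : ℂ)‖ ≤ ‖ev x‖ * ‖ev (M *ᵥ y)‖ := norm_inner_le_norm _ _
      _ ≤ ‖ev x‖ * (‖M‖ * ‖ev y‖) := by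
          have := ev_mulVec_norm_le M y
          exact mul_le_mul_of_nonneg_left this (norm_nonneg _)
      _ = ‖M‖ * a * b := by rw [← ha, ← hb]; ring
  have hpos : a > 0 ∨ b > 0 := by
    by_contra hcon
    push_neg at hcon
    have hxa : a = 0 := le_antisymm hcon.1 ha0
    have hxb : b = 0 := le_antisymm hcon.2 hb0
    have hx0 : x = 0 := by
      have : ev x = 0 := norm_eq_zero.mp hxa
      funext i; exact congrFun (congrArg (WithLp.equiv 2 (K → ℂ)) this) i
    have hy0 : y = 0 := by
      have : ev y = 0 := norm_eq_zero.mp hxb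
      funext i; exact congrFun (congrArg (WithLp.equiv 2 (K → ℂ)) this) i
    exact hv (by rw [hsplit, hx0, hy0]; funext i; cases i <;> rfl)
  rw [dot_self_eq, dot_self_eq, ← ha, ← hb]
  rw [Complex.lt_def]
  constructor
  · simp only [Complex.add_re, Complex.ofReal_re, Complex.zero_re]
    have hret : t.re + (star t).re = 2 * t.re := by
      simp [Complex.star_def, Complex.conj_re]; ring
    have habs : |t.re| ≤ ‖M‖ * a * b := le_trans (Complex.abs_re_le_norm t) htabs
    have h1 : -(‖M‖ * a * b) ≤ t.re := neg_le_of_abs_le habs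
    have hsq : 0 < a ^ 2 + b ^ 2 := by rcases hpos with h' | h' <;> nlinarith
    by_cases hab : a * b = 0
    · have hz : ‖M‖ * a * b = 0 := by rw [mul_assoc, hab, mul_zero]
      linarith
    · have habpos : 0 < a * b := lt_of_le_of_ne (mul_nonneg ha0 hb0) (Ne.symm hab)
      have hstrict : ‖M‖ * a * b < a * b := by
        calc ‖M‖ * a * b = ‖M‖ * (a * b) := by ring
          _ < 1 * (a * b) := mul_lt_mul_of_pos_right h habpos
          _ = a * b := one_mul _
      nlinarith [sq_nonneg (a - b)]
  · simp [Complex.add_im, Complex.ofReal_im, Complex.star_def, Complex.conj_im, pow_two,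
      Complex.mul_im]

end Analytic

theorem contract_of_posDef {K : Type*} [Fintype K] [DecidableEq K] {M : Matrix K K ℂ}
    (h : (Matrix.fromBlocks 1 M Mᴴ 1).PosDef) (y : K → ℂ) (hy : y ≠ 0) :
    ‖ev (M *ᵥ y)‖ < ‖ev y‖ := by
  set x : K → ℂ := -(M *ᵥ y) with hxdef
  have hv : Sum.elim x y ≠ 0 := by
    intro hh
    apply hy
    funext i
    exact congrFun hh (Sum.inr i)
  have hq := h.dotProduct_mulVec_pos hv
  rw [quad_fromBlocks_one] at hq
  have hdd : star (M *ᵥ y) ⬝ᵥ (M *ᵥ y) = ((‖ev (M *ᵥ y)‖ ^ 2 : ℝ) : ℂ) := dot_self_eq _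
  have hxy : star x ⬝ᵥ (M *ᵥ y) = -((‖ev (M *ᵥ y)‖ ^ 2 : ℝ) : ℂ) := by
    rw [hxdef, star_neg, neg_dotProduct, hdd]
  have hxx : star x ⬝ᵥ x = ((‖ev (M *ᵥ y)‖ ^ 2 : ℝ) : ℂ) := by
    rw [hxdef, star_neg, neg_dotProduct, dotProduct_neg, neg_neg, hdd]
  rw [hxx, dot_self_eq, hxy] at hq
  rw [Complex.lt_def] at hq
  obtain ⟨hre, -⟩ := hq
  simp only [Complex.add_re, Complex.neg_re, Complex.ofReal_re, Complex.zero_re,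
    Complex.star_def, map_neg, Complex.conj_re] at hre
  nlinarith [norm_nonneg (ev (M *ᵥ y)), norm_nonneg (ev y)]

theorem norm_lt_one_of_posDef {K : Type*} [Fintype K] [DecidableEq K] {M : Matrix K K ℂ}
    (h : (Matrix.fromBlocks 1 M Mᴴ 1).PosDef) : ‖M‖ < 1 := by
  cases isEmpty_or_nonempty K with
  | inl hK =>
    have hM : M = 0 := by
      ext i j
      exact (IsEmpty.false i).elim
    rw [hM, norm_zero]
    exact one_pos
  | inr hK =>
    set T := (Matrix.toEuclideanLin.trans LinearMap.toContinuousLinearMap) M with hT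
    have hTnorm : ‖M‖ = ‖T‖ := rfl
    have hTapp : ∀ z : EuclideanSpace ℂ K, T z = ev (M *ᵥ (WithLp.equiv 2 (K → ℂ)) z) := by
      intro z
      rfl
    have hsphere : (Metric.sphere (0 : EuclideanSpace ℂ K) 1).Nonempty := by
      obtain ⟨i⟩ := hK
      refine ⟨EuclideanSpace.single i (1 : ℂ), ?_⟩
      rw [mem_sphere_zero_iff_norm, EuclideanSpace.norm_single, norm_one]
    obtain ⟨y0, hy0S, hy0max⟩ := (isCompact_sphere (0 : EuclideanSpace ℂ K) 1).exists_isMaxOn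
      hsphere (T.continuous.norm.continuousOn)
    have hy0norm : ‖y0‖ = 1 := mem_sphere_zero_iff_norm.mp hy0S
    have hy0ne : ((WithLp.equiv 2 (K → ℂ)) y0 : K → ℂ) ≠ 0 := by
      intro hh
      have : y0 = 0 := by
        apply (WithLp.equiv 2 (K → ℂ)).injective
        simpa using hh
      rw [this, norm_zero] at hy0norm
      exact zero_ne_one hy0norm
    have hkey : ‖T y0‖ < 1 := by
      have := contract_of_posDef h ((WithLp.equiv 2 (K → ℂ)) y0) hy0ne
      rw [hTapp y0]
      have hev : ev ((WithLp.equiv 2 (K → ℂ)) y0) = y0 := (WithLp.equiv 2 (K → ℂ)).symm_apply_apply y0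
      rw [hev, hy0norm] at this
      exact this
    have hle : ‖T‖ ≤ ‖T y0‖ := by
      refine T.opNorm_le_bound (norm_nonneg _) fun z => ?_
      by_cases hz : z = 0
      · simp [hz]
      · have hnz : ‖z‖ ≠ 0 := fun hh => hz (norm_eq_zero.mp hh)
        have hzpos : 0 < ‖z‖ := lt_of_le_of_ne (norm_nonneg z) (Ne.symm hnz)
        have huS : (‖z‖⁻¹ • z) ∈ Metric.sphere (0 : EuclideanSpace ℂ K) 1 := by
          rw [mem_sphere_zero_iff_norm, norm_smul, norm_inv, norm_norm, inv_mul_cancel₀ hnz]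
        have hmax : ‖T (‖z‖⁻¹ • z)‖ ≤ ‖T y0‖ := hy0max huS
        have hTu : ‖T (‖z‖⁻¹ • z)‖ = ‖z‖⁻¹ * ‖T z‖ := by
          rw [T.map_smul_of_tower, norm_smul, norm_inv, norm_norm]
        rw [hTu] at hmax
        calc ‖T z‖ = ‖z‖ * (‖z‖⁻¹ * ‖T z‖) := by field_simp
          _ ≤ ‖z‖ * ‖T y0‖ := mul_le_mul_of_nonneg_left hmax hzpos.le
          _ = ‖T y0‖ * ‖z‖ := mul_comm _ _
    rw [hTnorm]
    exact lt_of_le_of_lt hle hkey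

theorem norm_mul_kron_unitary {d' e' n : ℕ} (G : Fin g → Matrix (Fin d') (Fin e') ℂ)
    (X : Fin g → Mat n) (U : Mat n) (hU : Uᴴ * U = 1) :
    ‖∑ j, G j ⊗ₖ (U * X j)‖ = ‖∑ j, G j ⊗ₖ X j‖ := by
  have hfac : (∑ j, G j ⊗ₖ (U * X j))
      = ((1 : Matrix (Fin d') (Fin d') ℂ) ⊗ₖ U) * ∑ j, G j ⊗ₖ X j := by
    rw [Matrix.mul_sum]
    refine Finset.sum_congr rfl fun j _ => ?_
    rw [← Matrix.mul_kronecker_mul, Matrix.one_mul]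
  set P := (1 : Matrix (Fin d') (Fin d') ℂ) ⊗ₖ U with hP
  set N := ∑ j, G j ⊗ₖ X j with hN
  have hPP : Pᴴ * P = 1 := by
    rw [hP, kron_ct, Matrix.conjTranspose_one, ← Matrix.mul_kronecker_mul, Matrix.one_mul, hU,
      Matrix.one_kronecker_one]
  have hsq : ‖P * N‖ * ‖P * N‖ = ‖N‖ * ‖N‖ := by
    rw [← Matrix.l2_opNorm_conjTranspose_mul_self (P * N),
      ← Matrix.l2_opNorm_conjTranspose_mul_self N]
    congr 1
    rw [Matrix.conjTranspose_mul, Matrix.mul_assoc, ← Matrix.mul_assoc Pᴴ P N, hPP,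
      Matrix.one_mul]
  rw [hfac]
  exact (mul_self_inj (norm_nonneg _) (norm_nonneg _)).mp hsq

end SpecBall

open SpecBall in
/-- Proposition 2.3: a free spectrahedron is a spectraball if and only if it is invariant
under left multiplication by unitaries, if and only if it equals its associated spectraball. -/
theorem spectrahedron_is_spectraball_tfae {g d : ℕ} (hg : 0 < g) (hd : 0 < d)
    (A : Fin g → Matrix (Fin d) (Fin d) ℂ) :
    [(∃ (d' e' : ℕ) (G : Fin g → Matrix (Fin d') (Fin e') ℂ),
        ∀ (n : ℕ) (X : Fin g → Mat n), X ∈ DAset A n ↔ ‖∑ j, G j ⊗ₖ X j‖ < 1),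
      (∀ (n : ℕ), ∀ X ∈ DAset A n, ∀ U ∈ Matrix.unitaryGroup (Fin n) ℂ,
        (fun j => U * X j) ∈ DAset A n),
      (∀ (n : ℕ) (X : Fin g → Mat n), X ∈ DAset A n ↔ ‖∑ j, A j ⊗ₖ X j‖ < 1)].TFAE := by
  tfae_have 3 → 1 := by
    intro h3
    exact ⟨d, d, A, h3⟩
  tfae_have 1 → 2 := by
    rintro ⟨d', e', G, hG⟩ n X hX U hU
    have hU' : Uᴴ * U = 1 := by
      have h1 : U * star U = 1 := Matrix.mem_unitaryGroup_iff.mp hU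
      rw [Matrix.star_eq_conjTranspose] at h1
      exact mul_eq_one_comm.mp h1
    rw [hG]
    rw [norm_mul_kron_unitary G X U hU']
    exact (hG n X).mp hX
  tfae_have 2 → 3 := by
    intro h2 n X
    set M := ∑ j, A j ⊗ₖ X j with hM
    have hYiff : Dg A (fun j => Matrix.fromBlocks 0 (X j) 0 0) ↔ ‖M‖ < 1 := by
      rw [Dg_offdiag_iff X]
      exact ⟨norm_lt_one_of_posDef, posDef_fromBlocks_one_of_norm_lt M⟩
    constructor
    · intro hX
      set W0 : Fin g → Matrix (Fin n ⊕ Fin n) (Fin n ⊕ Fin n) ℂ :=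
        fun j => Matrix.fromBlocks (X j) 0 0 (X j) with hW0def
      have hW0 : Dg A W0 := Dg_fromBlocks_diag hX hX
      have hW : Dg A (fun j => Matrix.fromBlocks (W0 j) 0 0 (W0 j)) :=
        Dg_fromBlocks_diag hW0 hW0
      set C : Matrix (Fin n ⊕ Fin n) (Fin n ⊕ Fin n) ℂ := Matrix.fromBlocks 0 1 0 0 with hC
      set U : Matrix ((Fin n ⊕ Fin n) ⊕ (Fin n ⊕ Fin n)) ((Fin n ⊕ Fin n) ⊕ (Fin n ⊕ Fin n)) ℂ :=
        Matrix.fromBlocks C (Matrix.fromBlocks 0 0 0 1) (Matrix.fromBlocks 1 0 0 0) (-Cᴴ)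
        with hUdef
      have hUU : U * Uᴴ = 1 := by
        rw [hUdef, hC]
        simp [Matrix.fromBlocks_conjTranspose, Matrix.fromBlocks_multiply,
          Matrix.conjTranspose_one, Matrix.fromBlocks_add, Matrix.fromBlocks_one]
      have hUW := Dg_unitary h2 _ hW U hUU
      have hsub := Dg_submatrix hUW
        (f := (Sum.inl : (Fin n ⊕ Fin n) → (Fin n ⊕ Fin n) ⊕ (Fin n ⊕ Fin n))) Sum.inl_injective
      have hident : (fun j =>
          ((fun j => U * Matrix.fromBlocks (W0 j) 0 0 (W0 j)) j).submatrix Sum.inl Sum.inl)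
          = fun j => Matrix.fromBlocks 0 (X j) 0 0 := by
        funext j
        ext p q
        rw [hUdef, hC, hW0def]
        rcases p with a | a <;> rcases q with b | b <;>
          simp [Matrix.fromBlocks_multiply, Matrix.submatrix_apply]
      rw [hident] at hsub
      exact hYiff.mp hsub
    · intro hnorm
      have hY : Dg A (fun j => Matrix.fromBlocks 0 (X j) 0 0) := hYiff.mpr hnorm
      set S : Matrix (Fin n ⊕ Fin n) (Fin n ⊕ Fin n) ℂ := Matrix.fromBlocks 0 1 1 0 with hS
      have hSS : S * Sᴴ = 1 := by
        rw [hS]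
        simp [Matrix.fromBlocks_conjTranspose, Matrix.fromBlocks_multiply,
          Matrix.conjTranspose_one]
      have hSY := Dg_unitary h2 _ hY S hSS
      have hsub := Dg_submatrix hSY
        (f := (Sum.inr : Fin n → Fin n ⊕ Fin n)) Sum.inr_injective
      have hident : (fun j =>
          ((fun j => S * Matrix.fromBlocks 0 (X j) 0 0) j).submatrix Sum.inr Sum.inr) = X := by
        funext j
        ext p q
        rw [hS]
        simp [Matrix.fromBlocks_multiply, Matrix.submatrix_apply]
      rw [hident] at hsub
      exact hsub
  tfae_finish
end
end

section
/- Assume C₁ and C₂ are invertible and that the star subalgebra of M_s(ℂ) generated by {C₁*C₁, C₂*C₂} and the star subalgebra generated by {C₁C₁*, C₂C₂*} both equal M_s(ℂ). Then 𝔓 is not a spectraball: there do not exist positive integers d, e and a pair G = (G₁, G₂) of d×e complex matrices such that 𝔓[n] = B_G[n] for all n. -/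
open scoped ComplexOrder Kronecker Matrix Matrix.Norms.L2Operator

noncomputable section

/-- The pencil `ℒ(X)` whose positivity defines the free spectrahedron `𝔓`. -/
def scrL {s : ℕ} (C1 C2 : Matrix (Fin s) (Fin s) ℂ) {α : Type*} [DecidableEq α]
    (X : Matrix α α ℂ × Matrix α α ℂ) :
    Matrix (Fin 4 × (Fin s × α)) (Fin 4 × (Fin s × α)) ℂ :=
  blockMat ![![1, C1 ⊗ₖ X.1, C2 ⊗ₖ X.2, 0],
             ![(C1 ⊗ₖ X.1)ᴴ, 1, 0, C2 ⊗ₖ X.2],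
             ![(C2 ⊗ₖ X.2)ᴴ, 0, 1, C1 ⊗ₖ X.1],
             ![0, (C2 ⊗ₖ X.2)ᴴ, (C1 ⊗ₖ X.1)ᴴ, 1]]

/-- The free spectrahedron `𝔓` at level `n`. -/
def freeP {s : ℕ} (C1 C2 : Matrix (Fin s) (Fin s) ℂ) (n : ℕ) : Set (Mat n × Mat n) :=
  {X | (scrL C1 C2 X).PosDef}

/-! ### Auxiliary material -/

open Matrix

/-- squared l2 norm of a finitely supported vector -/
def nsq {ι : Type*} [Fintype ι] (u : ι → ℂ) : ℝ := ∑ i, ‖u i‖^2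

lemma nsq_nn {ι : Type*} [Fintype ι] (u : ι → ℂ) : 0 ≤ nsq u :=
  Finset.sum_nonneg fun _ _ => sq_nonneg _

lemma nsq_pos_of_ne {ι : Type*} [Fintype ι] {u : ι → ℂ} (hu : u ≠ 0) : 0 < nsq u := by
  rcases Function.ne_iff.1 hu with ⟨i, hi⟩
  have : (0:ℝ) < ‖u i‖^2 := pow_pos (norm_pos_iff.2 hi) 2
  exact lt_of_lt_of_le this (Finset.single_le_sum (f := fun i => ‖u i‖^2)
    (fun _ _ => sq_nonneg _) (Finset.mem_univ i))

lemma norm_euc {ι : Type*} [Fintype ι] (u : ι → ℂ) :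
    ‖((WithLp.equiv 2 (ι → ℂ)).symm u : EuclideanSpace ℂ ι)‖ = Real.sqrt (nsq u) := by
  rw [EuclideanSpace.norm_eq]
  rfl

lemma mulVec_sq_le {a b : Type*} [Fintype a] [Fintype b] [DecidableEq b]
    (A : Matrix a b ℂ) (x : b → ℂ) : nsq (A *ᵥ x) ≤ ‖A‖^2 * nsq x := by
  have h := A.l2_opNorm_mulVec ((WithLp.equiv 2 (b → ℂ)).symm x)
  have h1 : ‖((WithLp.equiv 2 (a → ℂ)).symm (A *ᵥ x) : EuclideanSpace ℂ a)‖
      ≤ ‖A‖ * ‖((WithLp.equiv 2 (b → ℂ)).symm x : EuclideanSpace ℂ b)‖ := h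
  rw [norm_euc, norm_euc] at h1
  have h2 := mul_self_le_mul_self (Real.sqrt_nonneg _) h1
  calc nsq (A *ᵥ x) = Real.sqrt (nsq (A *ᵥ x)) * Real.sqrt (nsq (A *ᵥ x)) := by
        rw [Real.mul_self_sqrt (nsq_nn _)]
    _ ≤ (‖A‖ * Real.sqrt (nsq x)) * (‖A‖ * Real.sqrt (nsq x)) := h2
    _ = ‖A‖^2 * (Real.sqrt (nsq x) * Real.sqrt (nsq x)) := by ring
    _ = ‖A‖^2 * nsq x := by rw [Real.mul_self_sqrt (nsq_nn _)]

lemma opNorm_le_of {a b : Type*} [Fintype a] [Fintype b] [DecidableEq b]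
    (A : Matrix a b ℂ) {c : ℝ} (hc : 0 ≤ c)
    (h : ∀ x : b → ℂ, nsq (A *ᵥ x) ≤ c^2 * nsq x) : ‖A‖ ≤ c := by
  rw [Matrix.l2_opNorm_def]
  apply ContinuousLinearMap.opNorm_le_bound _ hc
  intro x
  have hx : (LinearEquiv.trans Matrix.toEuclideanLin LinearMap.toContinuousLinearMap A) x
      = (WithLp.equiv 2 (a → ℂ)).symm (A *ᵥ (WithLp.equiv 2 (b → ℂ)) x) := rfl
  rw [hx, norm_euc]
  have hxx : ‖x‖ = Real.sqrt (nsq ((WithLp.equiv 2 (b → ℂ)) x)) := by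
    rw [← norm_euc]; rfl
  rw [hxx]
  calc Real.sqrt (nsq (A *ᵥ (WithLp.equiv 2 (b → ℂ)) x))
      ≤ Real.sqrt (c^2 * nsq ((WithLp.equiv 2 (b → ℂ)) x)) := Real.sqrt_le_sqrt (h _)
    _ = c * Real.sqrt (nsq ((WithLp.equiv 2 (b → ℂ)) x)) := by
        rw [Real.sqrt_mul (sq_nonneg c), Real.sqrt_sq hc]

lemma cauchy {ι : Type*} [Fintype ι] (u w : ι → ℂ) :
    ‖star u ⬝ᵥ w‖ ≤ Real.sqrt (nsq u) * Real.sqrt (nsq w) := by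
  have h1 : star u ⬝ᵥ w = @inner ℂ _ _ ((WithLp.equiv 2 (ι → ℂ)).symm u : EuclideanSpace ℂ ι)
      ((WithLp.equiv 2 (ι → ℂ)).symm w) := by
    rw [PiLp.inner_apply]
    simp [dotProduct, RCLike.inner_apply, mul_comm]
  have h2 := norm_inner_le_norm (𝕜 := ℂ) ((WithLp.equiv 2 (ι → ℂ)).symm u : EuclideanSpace ℂ ι)
      ((WithLp.equiv 2 (ι → ℂ)).symm w)
  rw [← h1] at h2
  calc ‖star u ⬝ᵥ w‖ ≤ _ := h2
    _ = Real.sqrt (nsq u) * Real.sqrt (nsq w) := by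
        rw [norm_euc, norm_euc]

lemma dot_one {ι : Type*} [Fintype ι] [DecidableEq ι] (u : ι → ℂ) :
    star u ⬝ᵥ (1 : Matrix ι ι ℂ) *ᵥ u = ((nsq u : ℝ) : ℂ) := by
  rw [Matrix.one_mulVec, dotProduct, nsq]
  push_cast
  refine Finset.sum_congr rfl fun i _ => ?_
  rw [Pi.star_apply, Complex.star_def, mul_comm, Complex.mul_conj]
  norm_cast
  rw [Complex.normSq_eq_norm_sq]

lemma star_dot_self {ι : Type*} [Fintype ι] (u : ι → ℂ) :
    star u ⬝ᵥ u = ((nsq u : ℝ) : ℂ) := by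
  rw [dotProduct, nsq]
  push_cast
  refine Finset.sum_congr rfl fun i _ => ?_
  rw [Pi.star_apply, Complex.star_def, mul_comm, Complex.mul_conj]
  norm_cast
  rw [Complex.normSq_eq_norm_sq]

lemma dot_conjT {ι κ : Type*} [Fintype ι] [Fintype κ] (A : Matrix κ ι ℂ) (u : ι → ℂ) (w : κ → ℂ) :
    star u ⬝ᵥ Aᴴ *ᵥ w = starRingEnd ℂ (star w ⬝ᵥ A *ᵥ u) := by
  simp only [dotProduct, mulVec, conjTranspose_apply, map_sum, Finset.mul_sum, Pi.star_apply,
    _root_.map_mul, Complex.star_def, Complex.conj_conj]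
  rw [Finset.sum_comm]
  refine Finset.sum_congr rfl fun i _ => Finset.sum_congr rfl fun j _ => by ring

lemma cross_re {σ τ : Type*} [Fintype σ] [Fintype τ] [DecidableEq τ]
    (A : Matrix σ τ ℂ) (u : σ → ℂ) (w : τ → ℂ) :
    -(‖A‖ * (nsq u + nsq w) / 2) ≤ (star u ⬝ᵥ A *ᵥ w).re := by
  have hA : (0:ℝ) ≤ ‖A‖ := norm_nonneg _
  have h1 : ‖star u ⬝ᵥ A *ᵥ w‖ ≤ Real.sqrt (nsq u) * Real.sqrt (nsq (A *ᵥ w)) := cauchy _ _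
  have h2 : Real.sqrt (nsq (A *ᵥ w)) ≤ ‖A‖ * Real.sqrt (nsq w) := by
    calc Real.sqrt (nsq (A *ᵥ w)) ≤ Real.sqrt (‖A‖^2 * nsq w) :=
          Real.sqrt_le_sqrt (mulVec_sq_le A w)
      _ = ‖A‖ * Real.sqrt (nsq w) := by
          rw [Real.sqrt_mul (sq_nonneg _), Real.sqrt_sq hA]
  have h3 : ‖star u ⬝ᵥ A *ᵥ w‖ ≤ ‖A‖ * (Real.sqrt (nsq u) * Real.sqrt (nsq w)) := by
    calc ‖star u ⬝ᵥ A *ᵥ w‖ ≤ Real.sqrt (nsq u) * (‖A‖ * Real.sqrt (nsq w)) :=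
          le_trans h1 (mul_le_mul_of_nonneg_left h2 (Real.sqrt_nonneg _))
      _ = ‖A‖ * (Real.sqrt (nsq u) * Real.sqrt (nsq w)) := by ring
  have h4 : Real.sqrt (nsq u) * Real.sqrt (nsq w) ≤ (nsq u + nsq w) / 2 := by
    nlinarith [Real.sq_sqrt (nsq_nn u), Real.sq_sqrt (nsq_nn w), Real.sqrt_nonneg (nsq u),
      Real.sqrt_nonneg (nsq w), sq_nonneg (Real.sqrt (nsq u) - Real.sqrt (nsq w))]
  have h5 : ‖star u ⬝ᵥ A *ᵥ w‖ ≤ ‖A‖ * ((nsq u + nsq w) / 2) :=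
    le_trans h3 (mul_le_mul_of_nonneg_left h4 hA)
  have h6 : |(star u ⬝ᵥ A *ᵥ w).re| ≤ ‖star u ⬝ᵥ A *ᵥ w‖ := Complex.abs_re_le_norm _
  have := (abs_le.mp (le_trans h6 h5)).1
  linarith

lemma quad_blockMat {k : ℕ} {α : Type*} [Fintype α] (M : Fin k → Fin k → Matrix α α ℂ)
    (z : Fin k × α → ℂ) :
    star z ⬝ᵥ (blockMat M) *ᵥ z
      = ∑ p : Fin k, ∑ q : Fin k,
          star (fun x => z (p, x)) ⬝ᵥ (M p q) *ᵥ (fun y => z (q, y)) := by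
  simp only [dotProduct, mulVec, blockMat, Matrix.of_apply, Fintype.sum_prod_type, Pi.star_apply,
    Finset.mul_sum]
  exact Finset.sum_congr rfl fun p _ => Finset.sum_comm

set_option maxHeartbeats 400000 in
lemma scrL_isHermitian {s : ℕ} (C1 C2 : Matrix (Fin s) (Fin s) ℂ) {α : Type*} [DecidableEq α]
    (X : Matrix α α ℂ × Matrix α α ℂ) : (scrL C1 C2 X).IsHermitian := by
  show (scrL C1 C2 X)ᴴ = scrL C1 C2 X
  ext ⟨p, x⟩ ⟨q, y⟩
  rw [Matrix.conjTranspose_apply]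
  show star (blockMat _ (q,y) (p,x)) = blockMat _ (p,x) (q,y)
  rw [blockMat, Matrix.of_apply, Matrix.of_apply]
  fin_cases p <;> fin_cases q <;> dsimp <;>
    simp [Matrix.one_apply, Matrix.conjTranspose_apply, eq_comm, apply_ite]

lemma scrL_quad {s : ℕ} (C1 C2 : Matrix (Fin s) (Fin s) ℂ) {α : Type*} [Fintype α]
    [DecidableEq α] (X : Matrix α α ℂ × Matrix α α ℂ) (z : Fin 4 × (Fin s × α) → ℂ) :
    star z ⬝ᵥ (scrL C1 C2 X) *ᵥ z =
      (((nsq (fun x => z (0, x)) + nsq (fun x => z (1, x)) + nsq (fun x => z (2, x))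
          + nsq (fun x => z (3, x)) : ℝ)) : ℂ)
      + (star (fun x => z (0, x)) ⬝ᵥ (C1 ⊗ₖ X.1) *ᵥ (fun x => z (1, x))
          + starRingEnd ℂ (star (fun x => z (0, x)) ⬝ᵥ (C1 ⊗ₖ X.1) *ᵥ (fun x => z (1, x))))
      + (star (fun x => z (0, x)) ⬝ᵥ (C2 ⊗ₖ X.2) *ᵥ (fun x => z (2, x))
          + starRingEnd ℂ (star (fun x => z (0, x)) ⬝ᵥ (C2 ⊗ₖ X.2) *ᵥ (fun x => z (2, x))))
      + (star (fun x => z (1, x)) ⬝ᵥ (C2 ⊗ₖ X.2) *ᵥ (fun x => z (3, x))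
          + starRingEnd ℂ (star (fun x => z (1, x)) ⬝ᵥ (C2 ⊗ₖ X.2) *ᵥ (fun x => z (3, x))))
      + (star (fun x => z (2, x)) ⬝ᵥ (C1 ⊗ₖ X.1) *ᵥ (fun x => z (3, x))
          + starRingEnd ℂ (star (fun x => z (2, x)) ⬝ᵥ (C1 ⊗ₖ X.1) *ᵥ (fun x => z (3, x)))) := by
  rw [scrL, quad_blockMat]
  simp only [Fin.sum_univ_four, Matrix.cons_val', Matrix.cons_val_zero, Matrix.cons_val_one,
    Matrix.head_cons, Matrix.head_fin_const, Matrix.cons_val_fin_one, Matrix.empty_val',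
    Matrix.cons_val_two, Matrix.tail_cons, Matrix.cons_val_three]
  rw [dot_one, dot_one, dot_one, dot_one,
    dot_conjT (C1 ⊗ₖ X.1) (fun x => z (1, x)) (fun x => z (0, x)),
    dot_conjT (C2 ⊗ₖ X.2) (fun x => z (2, x)) (fun x => z (0, x)),
    dot_conjT (C2 ⊗ₖ X.2) (fun x => z (3, x)) (fun x => z (1, x)),
    dot_conjT (C1 ⊗ₖ X.1) (fun x => z (3, x)) (fun x => z (2, x))]
  simp only [Matrix.zero_mulVec, dotProduct_zero, Matrix.mulVec_zero]
  push_cast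
  ring

lemma scrL_posDef {s : ℕ} (C1 C2 : Matrix (Fin s) (Fin s) ℂ) {α : Type*} [Fintype α]
    [DecidableEq α] (X : Matrix α α ℂ × Matrix α α ℂ)
    (h : ‖C1 ⊗ₖ X.1‖ + ‖C2 ⊗ₖ X.2‖ < 1) : (scrL C1 C2 X).PosDef := by
  refine Matrix.PosDef.of_dotProduct_mulVec_pos (scrL_isHermitian C1 C2 X) fun z hz => ?_
  rw [scrL_quad]
  set Y1 := C1 ⊗ₖ X.1 with hY1
  set Y2 := C2 ⊗ₖ X.2 with hY2
  set z0 : Fin s × α → ℂ := fun x => z (0, x) with hz0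
  set z1 : Fin s × α → ℂ := fun x => z (1, x) with hz1
  set z2 : Fin s × α → ℂ := fun x => z (2, x) with hz2
  set z3 : Fin s × α → ℂ := fun x => z (3, x) with hz3
  set c01 := star z0 ⬝ᵥ Y1 *ᵥ z1
  set c02 := star z0 ⬝ᵥ Y2 *ᵥ z2
  set c13 := star z1 ⬝ᵥ Y2 *ᵥ z3
  set c23 := star z2 ⬝ᵥ Y1 *ᵥ z3
  have hre : ∀ c : ℂ, c + starRingEnd ℂ c = ((2 * c.re : ℝ) : ℂ) := fun c => by
    rw [Complex.add_conj]; try push_cast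
  rw [hre c01, hre c02, hre c13, hre c23]
  have : (((nsq z0 + nsq z1 + nsq z2 + nsq z3 : ℝ)) : ℂ) + ((2 * c01.re : ℝ) : ℂ)
      + ((2 * c02.re : ℝ) : ℂ) + ((2 * c13.re : ℝ) : ℂ) + ((2 * c23.re : ℝ) : ℂ)
      = (((nsq z0 + nsq z1 + nsq z2 + nsq z3
          + 2 * c01.re + 2 * c02.re + 2 * c13.re + 2 * c23.re : ℝ)) : ℂ) := by push_cast; ring
  rw [this]
  rw [Complex.zero_lt_real]
  have hb1 := cross_re Y1 z0 z1
  have hb2 := cross_re Y2 z0 z2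
  have hb3 := cross_re Y2 z1 z3
  have hb4 := cross_re Y1 z2 z3
  have hY1n : (0:ℝ) ≤ ‖Y1‖ := norm_nonneg _
  have hY2n : (0:ℝ) ≤ ‖Y2‖ := norm_nonneg _
  have hzp : 0 < nsq z0 + nsq z1 + nsq z2 + nsq z3 := by
    rcases Function.ne_iff.1 hz with ⟨⟨p, x⟩, hpx⟩
    fin_cases p
    · have h0 : z0 ≠ 0 := fun hc => hpx (congrFun hc x)
      have := nsq_pos_of_ne h0
      have := nsq_nn z1; have := nsq_nn z2; have := nsq_nn z3; linarith
    · have h0 : z1 ≠ 0 := fun hc => hpx (congrFun hc x)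
      have := nsq_pos_of_ne h0
      have := nsq_nn z0; have := nsq_nn z2; have := nsq_nn z3; linarith
    · have h0 : z2 ≠ 0 := fun hc => hpx (congrFun hc x)
      have := nsq_pos_of_ne h0
      have := nsq_nn z0; have := nsq_nn z1; have := nsq_nn z3; linarith
    · have h0 : z3 ≠ 0 := fun hc => hpx (congrFun hc x)
      have := nsq_pos_of_ne h0
      have := nsq_nn z0; have := nsq_nn z1; have := nsq_nn z2; linarith
  have hsum : ‖Y1‖ * (nsq z0 + nsq z1) / 2 + ‖Y2‖ * (nsq z0 + nsq z2) / 2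
      + ‖Y2‖ * (nsq z1 + nsq z3) / 2 + ‖Y1‖ * (nsq z2 + nsq z3) / 2
      ≤ (‖Y1‖ + ‖Y2‖) * (nsq z0 + nsq z1 + nsq z2 + nsq z3) / 2 + 0 := by
    have := nsq_nn z0; have := nsq_nn z1; have := nsq_nn z2; have := nsq_nn z3
    nlinarith
  nlinarith [mul_le_mul_of_nonneg_right (le_of_lt h) (le_of_lt hzp)]

def E01 : Mat 2 := Matrix.single 0 1 1
def E10 : Mat 2 := Matrix.single 1 0 1

def blk {s : ℕ} (k : Fin 2) (g : Fin s → ℂ) : Fin s × Fin 2 → ℂ :=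
  fun x => if x.2 = k then g x.1 else 0

lemma nsq_blk {s : ℕ} (k : Fin 2) (g : Fin s → ℂ) : nsq (blk k g) = nsq g := by
  simp only [nsq, blk, Fintype.sum_prod_type, apply_ite, norm_zero]
  rw [Finset.sum_comm]
  simp [Finset.sum_ite_eq', zero_pow]

lemma nsq_negf {s : ℕ} (g : Fin s → ℂ) : nsq (fun i => -(g i)) = nsq g := by
  simp [nsq]

lemma nsq_cmul {s : ℕ} (c : ℂ) (g : Fin s → ℂ) :
    nsq (fun i => c * g i) = ‖c‖^2 * nsq g := by
  simp [nsq, mul_pow, Finset.mul_sum]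

lemma dotE01 {s : ℕ} (C : Matrix (Fin s) (Fin s) ℂ) (t : ℂ) (g h : Fin s → ℂ) :
    star (blk 0 g) ⬝ᵥ (C ⊗ₖ (t • E01)) *ᵥ (blk 1 h) = t * (star g ⬝ᵥ C *ᵥ h) := by
  simp only [dotProduct, mulVec, blk, Fintype.sum_prod_type, Matrix.kroneckerMap_apply,
    Matrix.smul_apply, E01, Matrix.single, Matrix.of_apply, Fin.sum_univ_two,
    Pi.star_apply, smul_eq_mul]
  norm_num
  simp only [Finset.mul_sum]
  rw [Finset.sum_comm]
  nth_rewrite 2 [Finset.sum_comm]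
  refine Finset.sum_congr rfl fun i _ => Finset.sum_congr rfl fun j _ => by ring

lemma dotE10 {s : ℕ} (C : Matrix (Fin s) (Fin s) ℂ) (t : ℂ) (g h : Fin s → ℂ) :
    star (blk 1 g) ⬝ᵥ (C ⊗ₖ (t • E10)) *ᵥ (blk 0 h) = t * (star g ⬝ᵥ C *ᵥ h) := by
  simp only [dotProduct, mulVec, blk, Fintype.sum_prod_type, Matrix.kroneckerMap_apply,
    Matrix.smul_apply, E10, Matrix.single, Matrix.of_apply, Fin.sum_univ_two,
    Pi.star_apply, smul_eq_mul]
  norm_num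
  simp only [Finset.mul_sum]
  rw [Finset.sum_comm]
  nth_rewrite 2 [Finset.sum_comm]
  refine Finset.sum_congr rfl fun i _ => Finset.sum_congr rfl fun j _ => by ring

lemma kron_one1_mulVec {d e : ℕ} (C : Matrix (Fin d) (Fin e) ℂ) (x : Fin e × Fin 1 → ℂ) :
    (C ⊗ₖ (1 : Mat 1)) *ᵥ x = fun p => (C *ᵥ fun j => x (j, 0)) p.1 := by
  funext ⟨i, c⟩
  simp only [mulVec, dotProduct, Fintype.sum_prod_type, Matrix.kroneckerMap_apply,
    Fin.sum_univ_one, Matrix.one_apply]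
  refine Finset.sum_congr rfl fun j _ => ?_
  have : c = 0 := Subsingleton.elim _ _
  subst this
  norm_num

lemma nsq_prod_one {e : ℕ} (x : Fin e × Fin 1 → ℂ) : nsq x = nsq (fun j => x (j, 0)) := by
  simp only [nsq, Fintype.sum_prod_type, Fin.sum_univ_one]

lemma nsq_prod_two {e : ℕ} (x : Fin e × Fin 2 → ℂ) :
    nsq x = nsq (fun j => x (j, 0)) + nsq (fun j => x (j, 1)) := by
  simp only [nsq, Fintype.sum_prod_type, Fin.sum_univ_two]
  rw [Finset.sum_add_distrib]

lemma kronE_mulVec {d e : ℕ} (G1 G2 : Matrix (Fin d) (Fin e) ℂ) (t : ℂ)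
    (x : Fin e × Fin 2 → ℂ) :
    (G1 ⊗ₖ (t • E01) + G2 ⊗ₖ (t • E10)) *ᵥ x
      = fun p => if p.2 = 0 then t * (G1 *ᵥ fun j => x (j, 1)) p.1
          else t * (G2 *ᵥ fun j => x (j, 0)) p.1 := by
  funext ⟨i, c⟩
  simp only [Matrix.add_mulVec, Pi.add_apply, mulVec, dotProduct, Fintype.sum_prod_type,
    Matrix.kroneckerMap_apply, Matrix.add_apply, Matrix.smul_apply, E01, E10,
    Matrix.single, Matrix.of_apply, Fin.sum_univ_two, smul_eq_mul]
  fin_cases c <;> norm_num <;> rw [Finset.mul_sum] <;>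
    exact Finset.sum_congr rfl fun j _ => by ring

/-- Norm bound for the kronecker product with the 1×1 identity. -/
lemma kron_one1_norm_le {d e : ℕ} (C : Matrix (Fin d) (Fin e) ℂ) :
    ‖C ⊗ₖ (1 : Mat 1)‖ ≤ ‖C‖ := by
  apply opNorm_le_of _ (norm_nonneg C)
  intro x
  rw [kron_one1_mulVec, nsq_prod_one x]
  have : nsq (fun p : Fin d × Fin 1 => (C *ᵥ fun j => x (j, 0)) p.1)
      = nsq (C *ᵥ fun j => x (j, 0)) := nsq_prod_one _
  rw [this]
  exact mulVec_sq_le C _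

set_option maxHeartbeats 2000000 in
/-- Proposition 2.2 (second half): `𝔓` is not a spectraball. -/
theorem P_is_not_a_spectraball {s : ℕ} (hs : 0 < s)
    (C1 C2 : Matrix (Fin s) (Fin s) ℂ) (hnorm1 : ‖C1‖ = 1) (hnorm2 : ‖C2‖ = 1)
    (hinv1 : IsUnit C1) (hinv2 : IsUnit C2)
    (hgen1 : StarAlgebra.adjoin ℂ ({C1ᴴ * C1, C2ᴴ * C2} : Set (Matrix (Fin s) (Fin s) ℂ)) = ⊤)
    (hgen2 : StarAlgebra.adjoin ℂ ({C1 * C1ᴴ, C2 * C2ᴴ} : Set (Matrix (Fin s) (Fin s) ℂ)) = ⊤) :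
    ¬ ∃ (d e : ℕ), 0 < d ∧ 0 < e ∧
      ∃ (G1 G2 : Matrix (Fin d) (Fin e) ℂ),
        ∀ (n : ℕ) (X : Mat n × Mat n),
          X ∈ freeP C1 C2 n ↔ ‖G1 ⊗ₖ X.1 + G2 ⊗ₖ X.2‖ < 1 := by
  rintro ⟨d, e, hd, he, G1, G2, hG⟩
  -- an inverse for `C2`
  set D : Matrix (Fin s) (Fin s) ℂ := ↑hinv2.unit⁻¹ with hD
  have hCD : C2 * D = 1 := by
    rw [hD]
    exact hinv2.mul_val_inv
  set KD : ℝ := ‖Dᴴ‖ with hKD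
  have hKDpos : 0 < KD := by
    rw [hKD, norm_pos_iff]
    intro hc
    have hD0 : D = 0 := by
      have := congrArg Matrix.conjTranspose hc
      rwa [Matrix.conjTranspose_conjTranspose, Matrix.conjTranspose_zero] at this
    rw [hD0, mul_zero] at hCD
    have h1 : (0 : Matrix (Fin s) (Fin s) ℂ) ⟨0, hs⟩ ⟨0, hs⟩
        = (1 : Matrix (Fin s) (Fin s) ℂ) ⟨0, hs⟩ ⟨0, hs⟩ := by rw [hCD]
    rw [Matrix.zero_apply, Matrix.one_apply_eq] at h1
    exact one_ne_zero h1.symm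
  set δ : ℝ := min (KD^2)⁻¹ (1/2) with hδ
  have hδpos : 0 < δ := lt_min (by positivity) (by norm_num)
  have hδhalf : δ ≤ 1/2 := min_le_right _ _
  have hδKD : δ ≤ (KD^2)⁻¹ := min_le_left _ _
  -- find a good vector `v`
  have hvex : ∃ v : Fin s → ℂ, (1 - δ) * nsq v < nsq (C1 *ᵥ v) := by
    by_contra hcon
    push_neg at hcon
    have hC1le : ‖C1‖ ≤ Real.sqrt (1 - δ) := by
      apply opNorm_le_of _ (Real.sqrt_nonneg _)
      intro x
      rw [Real.sq_sqrt (by linarith : (0:ℝ) ≤ 1 - δ)]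
      exact hcon x
    have hlt : Real.sqrt (1 - δ) < 1 := by
      nlinarith [Real.sq_sqrt (show (0:ℝ) ≤ 1 - δ by linarith),
        Real.sqrt_nonneg (1 - δ)]
    rw [hnorm1] at hC1le
    linarith
  obtain ⟨v, hv⟩ := hvex
  set w1 : Fin s → ℂ := C1 *ᵥ v with hw1
  set w2 : Fin s → ℂ := C2ᴴ *ᵥ v with hw2
  set a : ℝ := nsq w1 with ha
  set b : ℝ := nsq w2 with hb
  set S : ℝ := nsq v with hS
  have hvne : v ≠ 0 := by
    intro hc
    have hS0 : S = 0 := by rw [hS, hc]; simp [nsq]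
    have ha0 : a = 0 := by rw [ha, hw1, hc, Matrix.mulVec_zero]; simp [nsq]
    rw [hS0, ha0] at hv
    norm_num at hv
  have hSpos : 0 < S := nsq_pos_of_ne hvne
  have haS : (1 - δ) * S < a := hv
  have hbS : δ * S ≤ b := by
    have hvw : Dᴴ *ᵥ w2 = v := by
      rw [hw2, Matrix.mulVec_mulVec, ← Matrix.conjTranspose_mul, hCD,
        Matrix.conjTranspose_one, Matrix.one_mulVec]
    have h1 : S ≤ KD^2 * b := by
      rw [hS, ← hvw, hb]
      exact mulVec_sq_le Dᴴ w2
    have h2 : (KD^2)⁻¹ * S ≤ b := by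
      rw [inv_mul_le_iff₀ (by positivity)]
      linarith [h1]
    calc δ * S ≤ (KD^2)⁻¹ * S := by
          apply mul_le_mul_of_nonneg_right hδKD (le_of_lt hSpos)
      _ ≤ b := h2
  set Mv : ℝ := a + b with hMv
  have hSM : S < Mv := by nlinarith
  have hMpos : 0 < Mv := lt_trans hSpos hSM
  -- the scaling parameter t
  set t : ℝ := Real.sqrt ((1 + S/Mv)/2) with ht
  have hSMdiv : S/Mv < 1 := (div_lt_one hMpos).2 hSM
  have hSMdivpos : 0 < S/Mv := div_pos hSpos hMpos
  have htpos : 0 < t := Real.sqrt_pos.2 (by linarith)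
  have htsq : t^2 = (1 + S/Mv)/2 := Real.sq_sqrt (by linarith)
  have htlt : t < 1 := by
    nlinarith [htsq, htpos]
  have htS : S < t^2 * Mv := by
    rw [htsq]
    rw [div_mul_eq_mul_div, add_mul, one_mul, div_mul_eq_mul_div, mul_div_assoc,
      div_self (ne_of_gt hMpos), mul_one]
    linarith
  set β : ℝ := t * Mv / S with hβ
  have hβpos : 0 < β := by positivity
  set r : ℝ := (t + 1)/2 with hr
  have hrpos : 0 < r := by rw [hr]; linarith
  have hrt : t < r := by rw [hr]; linarith
  have hrlt : r < 1 := by rw [hr]; linarith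
  -- Step A : bounds on G1, G2
  have hkron_smul : ∀ (d' e' : ℕ) (C : Matrix (Fin d') (Fin e') ℂ),
      C ⊗ₖ ((r:ℂ) • (1 : Mat 1)) = (r:ℂ) • (C ⊗ₖ (1 : Mat 1)) := by
    intro d' e' C
    ext ⟨i, c⟩ ⟨j, c'⟩
    simp [Matrix.kroneckerMap_apply, Matrix.smul_apply]
    ring
  have hsmul_norm : ∀ (d' e' : ℕ) (C : Matrix (Fin d') (Fin e') ℂ),
      ‖C ⊗ₖ ((r:ℂ) • (1 : Mat 1))‖ ≤ r * ‖C‖ := by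
    intro d' e' C
    rw [hkron_smul]
    rw [norm_smul]
    have : ‖((r:ℝ) : ℂ)‖ = r := by
      rw [Complex.norm_real, Real.norm_eq_abs, abs_of_pos hrpos]
    rw [this]
    exact mul_le_mul_of_nonneg_left (kron_one1_norm_le C) (le_of_lt hrpos)
  have hin1 : (((r:ℂ) • 1, 0) : Mat 1 × Mat 1) ∈ freeP C1 C2 1 := by
    apply scrL_posDef
    simp only [Matrix.kronecker_zero, norm_zero, add_zero]
    calc ‖C1 ⊗ₖ ((r:ℂ) • (1 : Mat 1))‖ ≤ r * ‖C1‖ := hsmul_norm _ _ C1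
      _ < 1 := by rw [hnorm1]; linarith
  have hin2 : ((0, (r:ℂ) • 1) : Mat 1 × Mat 1) ∈ freeP C1 C2 1 := by
    apply scrL_posDef
    simp only [Matrix.kronecker_zero, norm_zero, zero_add]
    calc ‖C2 ⊗ₖ ((r:ℂ) • (1 : Mat 1))‖ ≤ r * ‖C2‖ := hsmul_norm _ _ C2
      _ < 1 := by rw [hnorm2]; linarith
  have hBG1 : ‖G1 ⊗ₖ ((r:ℂ) • (1 : Mat 1))‖ < 1 := by
    have h := (hG 1 ((r:ℂ) • 1, 0)).1 hin1
    simpa only [Matrix.kronecker_zero, add_zero] using h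
  have hBG2 : ‖G2 ⊗ₖ ((r:ℂ) • (1 : Mat 1))‖ < 1 := by
    have h := (hG 1 (0, (r:ℂ) • 1)).1 hin2
    simpa only [Matrix.kronecker_zero, zero_add] using h
  have hA : ∀ (G : Matrix (Fin d) (Fin e) ℂ), ‖G ⊗ₖ ((r:ℂ) • (1 : Mat 1))‖ < 1 →
      ∀ u : Fin e → ℂ, nsq (G *ᵥ u) ≤ (1/r)^2 * nsq u := by
    intro G hGlt u
    set x : Fin e × Fin 1 → ℂ := fun p => u p.1 with hx
    have h1 : nsq ((G ⊗ₖ ((r:ℂ) • (1 : Mat 1))) *ᵥ x) ≤ nsq x := by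
      calc nsq ((G ⊗ₖ ((r:ℂ) • (1 : Mat 1))) *ᵥ x)
          ≤ ‖G ⊗ₖ ((r:ℂ) • (1 : Mat 1))‖^2 * nsq x := mulVec_sq_le _ _
        _ ≤ 1 * nsq x := by
            apply mul_le_mul_of_nonneg_right _ (nsq_nn x)
            nlinarith [norm_nonneg (G ⊗ₖ ((r:ℂ) • (1 : Mat 1)))]
        _ = nsq x := one_mul _
    have h2 : (G ⊗ₖ ((r:ℂ) • (1 : Mat 1))) *ᵥ x = fun p => (r:ℂ) * (G *ᵥ u) p.1 := by
      rw [hkron_smul, Matrix.smul_mulVec, kron_one1_mulVec]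
      funext p
      simp [hx, smul_eq_mul]
    have h3 : nsq (fun p : Fin d × Fin 1 => (r:ℂ) * (G *ᵥ u) p.1) = r^2 * nsq (G *ᵥ u) := by
      rw [nsq_prod_one]
      have : nsq (fun j => (r:ℂ) * (G *ᵥ u) j) = ‖((r:ℝ):ℂ)‖^2 * nsq (G *ᵥ u) := nsq_cmul _ _
      rw [this, Complex.norm_real, Real.norm_eq_abs, abs_of_pos hrpos]
    have h4 : nsq x = nsq u := nsq_prod_one x
    rw [h2, h3, h4] at h1
    have hrr : (0:ℝ) < r^2 := by positivity
    have h5 : nsq (G *ᵥ u) ≤ nsq u / r^2 := by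
      rw [le_div_iff₀ hrr]
      linarith [h1]
    calc nsq (G *ᵥ u) ≤ nsq u / r^2 := h5
      _ = (1/r)^2 * nsq u := by field_simp
  have hA1 := hA G1 hBG1
  have hA2 := hA G2 hBG2
  -- Step B : the test point at level 2
  set X : Mat 2 × Mat 2 := ((t:ℂ) • E01, (t:ℂ) • E10) with hX
  have hXnorm : ‖G1 ⊗ₖ X.1 + G2 ⊗ₖ X.2‖ < 1 := by
    have hbound : ‖G1 ⊗ₖ ((t:ℂ) • E01) + G2 ⊗ₖ ((t:ℂ) • E10)‖ ≤ t * (1/r) := by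
      apply opNorm_le_of _ (by positivity)
      intro x
      rw [kronE_mulVec]
      set x0 : Fin e → ℂ := fun j => x (j, 0) with hx0
      set x1 : Fin e → ℂ := fun j => x (j, 1) with hx1
      have hsplit : nsq (fun p : Fin d × Fin 2 =>
          if p.2 = 0 then (t:ℂ) * (G1 *ᵥ x1) p.1 else (t:ℂ) * (G2 *ᵥ x0) p.1)
          = nsq (fun j => (t:ℂ) * (G1 *ᵥ x1) j) + nsq (fun j => (t:ℂ) * (G2 *ᵥ x0) j) := by
        rw [nsq_prod_two]
        norm_num
      rw [hsplit]
      rw [nsq_cmul, nsq_cmul]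
      have htn : ‖((t:ℝ):ℂ)‖^2 = t^2 := by
        rw [Complex.norm_real, Real.norm_eq_abs, abs_of_pos htpos]
      rw [htn]
      have e1 : nsq (G1 *ᵥ x1) ≤ (1/r)^2 * nsq x1 := hA1 x1
      have e2 : nsq (G2 *ᵥ x0) ≤ (1/r)^2 * nsq x0 := hA2 x0
      have e3 : nsq x = nsq x0 + nsq x1 := nsq_prod_two x
      rw [e3, mul_pow]
      nlinarith [nsq_nn x0, nsq_nn x1, sq_nonneg t, sq_nonneg (1/r)]
    calc ‖G1 ⊗ₖ X.1 + G2 ⊗ₖ X.2‖ = ‖G1 ⊗ₖ ((t:ℂ) • E01) + G2 ⊗ₖ ((t:ℂ) • E10)‖ := rfl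
      _ ≤ t * (1/r) := hbound
      _ < 1 := by
          rw [mul_one_div, div_lt_one hrpos]
          exact hrt
  have hPD : (scrL C1 C2 X).PosDef := (hG 2 X).2 hXnorm
  -- the test vector
  set z : Fin 4 × (Fin s × Fin 2) → ℂ := fun p =>
    if p.1 = 0 then blk 0 (fun i => -(w1 i)) p.2
    else if p.1 = 1 then blk 1 (fun i => (β:ℂ) * v i) p.2
    else if p.1 = 3 then blk 0 (fun i => -(w2 i)) p.2 else 0 with hz
  have hz0 : (fun x => z (0, x)) = blk 0 (fun i => -(w1 i)) := by
    funext x; simp [hz]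
  have hz1 : (fun x => z (1, x)) = blk 1 (fun i => (β:ℂ) * v i) := by
    funext x; simp [hz]
  have hz2 : (fun x => z (2, x)) = (0 : Fin s × Fin 2 → ℂ) := by
    funext x; simp [hz]
  have hz3 : (fun x => z (3, x)) = blk 0 (fun i => -(w2 i)) := by
    funext x; simp [hz]
  have hzne : z ≠ 0 := by
    rcases Function.ne_iff.1 hvne with ⟨i, hi⟩
    intro hc
    have h0 : z (1, (i, 1)) = 0 := by rw [hc]; rfl
    have h1 : z (1, (i, 1)) = (β:ℂ) * v i := by
      have := congrFun hz1 (i, 1)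
      simpa [blk] using this
    rw [h1] at h0
    rcases mul_eq_zero.1 h0 with h | h
    · exact (Complex.ofReal_ne_zero.2 (ne_of_gt hβpos)) h
    · exact hi h
  have hQpos := hPD.dotProduct_mulVec_pos hzne
  -- compute the quadratic form
  have hc01 : star (fun x => z (0, x)) ⬝ᵥ (C1 ⊗ₖ X.1) *ᵥ (fun x => z (1, x))
      = ((-(t * β * a) : ℝ) : ℂ) := by
    rw [hz0, hz1]
    rw [show (C1 ⊗ₖ X.1) = C1 ⊗ₖ (((t:ℝ):ℂ) • E01) from rfl]
    rw [dotE01]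
    have hmul : C1 *ᵥ (fun i => (β:ℂ) * v i) = fun i => (β:ℂ) * w1 i := by
      have : (fun i => (β:ℂ) * v i) = (β:ℂ) • v := by funext i; simp
      rw [this, Matrix.mulVec_smul, hw1]
      funext i; simp
    rw [hmul]
    have hstar : star (fun i => -(w1 i)) = fun i => -(star (w1 i)) := by
      funext i; simp
    rw [hstar]
    have : (fun i => -(star (w1 i))) ⬝ᵥ (fun i => (β:ℂ) * w1 i)
        = -((β:ℂ) * (star w1 ⬝ᵥ w1)) := by
      simp only [dotProduct, Pi.star_apply, Finset.mul_sum]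
      rw [← Finset.sum_neg_distrib]
      exact Finset.sum_congr rfl fun i _ => by ring
    rw [this, star_dot_self, ← ha]
    push_cast
    ring
  have hc13 : star (fun x => z (1, x)) ⬝ᵥ (C2 ⊗ₖ X.2) *ᵥ (fun x => z (3, x))
      = ((-(t * β * b) : ℝ) : ℂ) := by
    rw [hz1, hz3]
    rw [show (C2 ⊗ₖ X.2) = C2 ⊗ₖ (((t:ℝ):ℂ) • E10) from rfl]
    rw [dotE10]
    have hmul : C2 *ᵥ (fun i => -(w2 i)) = fun i => -((C2 *ᵥ w2) i) := by
      have : (fun i => -(w2 i)) = -w2 := by funext i; simp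
      rw [this, Matrix.mulVec_neg]
      funext i; simp
    rw [hmul]
    have hstar : star (fun i => (β:ℂ) * v i) = fun i => (β:ℂ) * star (v i) := by
      funext i
      simp [Complex.star_def, Complex.conj_ofReal]
    rw [hstar]
    have hdd : (fun i => (β:ℂ) * star (v i)) ⬝ᵥ (fun i => -((C2 *ᵥ w2) i))
        = -((β:ℂ) * (star v ⬝ᵥ C2 *ᵥ w2)) := by
      simp only [dotProduct, Pi.star_apply, Finset.mul_sum]
      rw [← Finset.sum_neg_distrib]
      exact Finset.sum_congr rfl fun i _ => by ring
    rw [hdd]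
    have hvb : star v ⬝ᵥ C2 *ᵥ w2 = ((b : ℝ) : ℂ) := by
      have h := dot_conjT (C2ᴴ) v w2
      rw [Matrix.conjTranspose_conjTranspose] at h
      rw [h, ← hw2, star_dot_self, ← hb]
      exact Complex.conj_ofReal b
    rw [hvb]
    push_cast
    ring
  have hquad : star z ⬝ᵥ (scrL C1 C2 X) *ᵥ z
      = ((Mv + β^2 * S - 2 * t * β * Mv : ℝ) : ℂ) := by
    rw [scrL_quad]
    rw [hc01, hc13]
    have hzero1 : star (fun x => z (0, x)) ⬝ᵥ (C2 ⊗ₖ X.2) *ᵥ (fun x => z (2, x)) = 0 := by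
      rw [hz2, Matrix.mulVec_zero, dotProduct_zero]
    have hzero2 : star (fun x => z (2, x)) ⬝ᵥ (C1 ⊗ₖ X.1) *ᵥ (fun x => z (3, x)) = 0 := by
      rw [hz2, star_zero, zero_dotProduct]
    rw [hzero1, hzero2]
    have hn0 : nsq (fun x => z (0, x)) = a := by
      rw [hz0, nsq_blk, nsq_negf, ← ha]
    have hn1 : nsq (fun x => z (1, x)) = β^2 * S := by
      rw [hz1, nsq_blk, nsq_cmul, Complex.norm_real, Real.norm_eq_abs, abs_of_pos hβpos, ← hS]
    have hn2 : nsq (fun x => z (2, x)) = 0 := by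
      rw [hz2]
      simp [nsq]
    have hn3 : nsq (fun x => z (3, x)) = b := by
      rw [hz3, nsq_blk, nsq_negf, ← hb]
    rw [hn0, hn1, hn2, hn3]
    rw [map_zero]
    have hconj : ∀ (x : ℝ), starRingEnd ℂ ((x : ℝ) : ℂ) = ((x : ℝ) : ℂ) :=
      fun x => Complex.conj_ofReal x
    rw [hconj, hconj]
    rw [hMv]
    push_cast
    ring
  rw [hquad, Complex.zero_lt_real] at hQpos
  -- final contradiction
  have hβval : β * S = t * Mv := by
    rw [hβ, div_mul_eq_mul_div, mul_div_assoc, div_self (ne_of_gt hSpos), mul_one]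
  have hkey : Mv + β^2 * S - 2 * t * β * Mv < 0 := by
    have h1 : β^2 * S = t * Mv * β := by
      rw [pow_two, mul_assoc, hβval]; ring
    rw [h1]
    have h2 : Mv + t * Mv * β - 2 * t * β * Mv = Mv - t * β * Mv := by ring
    rw [h2]
    have h3 : t * β = t^2 * Mv / S := by
      rw [hβ]; field_simp
    rw [h3]
    have h4 : Mv - t^2 * Mv / S * Mv = Mv * (S - t^2 * Mv) / S := by
      field_simp
    rw [h4]
    apply div_neg_of_neg_of_pos _ hSpos
    apply mul_neg_of_pos_of_neg hMpos
    linarith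
  linarith
end
end

section
/- For every n and every X = (X₁,X₂) ∈ Mₙ(ℂ)², the following are equivalent: (i) ‖Λ_R(X)‖ < 1; (ii) ‖Λ_E(X)‖ < 1; (iii) both ‖Λ_{E^r}(X)‖ < 1 and ‖Λ_{E^c}(X)‖ < 1, i.e., both the block-row matrix [C₁⊗X₁ C₂⊗X₂] and the block-column matrix [C₁⊗X₁ ; C₂⊗X₂] have operator norm strictly less than 1. -/
open scoped Matrix Matrix.Norms.L2Operator
open Matrix

noncomputable section
namespace AuxNorm
set_option linter.unusedSectionVars false

variable {m n p q : Type*} [Fintype m] [Fintype n] [Fintype p] [Fintype q]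
  [DecidableEq m] [DecidableEq n] [DecidableEq p] [DecidableEq q]

lemma euclid_norm_comp (e : m ≃ n) (y : n → ℂ) :
    ‖(WithLp.equiv 2 (m → ℂ)).symm (y ∘ e)‖ = ‖(WithLp.equiv 2 (n → ℂ)).symm y‖ := by
  simp only [EuclideanSpace.norm_eq, WithLp.equiv_symm_apply, PiLp.toLp_apply, Function.comp_apply]
  rw [Equiv.sum_comp e (fun j => ‖y j‖ ^ 2)]

lemma opnorm_le_of (A : Matrix m n ℂ) (c : ℝ) (hc : 0 ≤ c)
    (h : ∀ x : n → ℂ, ‖(WithLp.equiv 2 (m → ℂ)).symm (A *ᵥ x)‖ ≤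
      c * ‖(WithLp.equiv 2 (n → ℂ)).symm x‖) : ‖A‖ ≤ c := by
  rw [Matrix.l2_opNorm_def]
  refine ContinuousLinearMap.opNorm_le_bound _ hc fun x => ?_
  have h2 := h (WithLp.equiv 2 (n → ℂ) x)
  simpa [Matrix.toEuclideanLin_apply] using h2

lemma mulVec_le (A : Matrix m n ℂ) (x : n → ℂ) :
    ‖(WithLp.equiv 2 (m → ℂ)).symm (A *ᵥ x)‖ ≤
      ‖A‖ * ‖(WithLp.equiv 2 (n → ℂ)).symm x‖ := by
  simpa using A.l2_opNorm_mulVec ((WithLp.equiv 2 (n → ℂ)).symm x)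

lemma submatrix_le (A : Matrix m n ℂ) (e : p ≃ m) (f : q ≃ n) :
    ‖A.submatrix e f‖ ≤ ‖A‖ := by
  refine opnorm_le_of _ _ (norm_nonneg A) fun x => ?_
  have hmv : A.submatrix e f *ᵥ x = (A *ᵥ (x ∘ f.symm)) ∘ e := by
    ext i
    simp only [Matrix.mulVec, Matrix.submatrix_apply, dotProduct, Function.comp_apply]
    rw [← Equiv.sum_comp f (fun j => A (e i) j * x (f.symm j))]
    simp
  have hx : ‖(WithLp.equiv 2 (q → ℂ)).symm x‖ = ‖(WithLp.equiv 2 (n → ℂ)).symm (x ∘ f.symm)‖ := by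
    rw [← euclid_norm_comp f (x ∘ f.symm)]
    congr 1
    ext j; simp
  rw [hmv, euclid_norm_comp e, hx]
  exact mulVec_le A _

lemma submatrix_norm (A : Matrix m n ℂ) (e : p ≃ m) (f : q ≃ n) :
    ‖A.submatrix e f‖ = ‖A‖ := by
  refine le_antisymm (submatrix_le A e f) ?_
  have := submatrix_le (A.submatrix e f) e.symm f.symm
  simpa [Matrix.submatrix_submatrix] using this

lemma sum_norm_sq (y : (m ⊕ p) → ℂ) :
    ‖(WithLp.equiv 2 ((m ⊕ p) → ℂ)).symm y‖ ^ 2 =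
      ‖(WithLp.equiv 2 (m → ℂ)).symm (y ∘ Sum.inl)‖ ^ 2 +
      ‖(WithLp.equiv 2 (p → ℂ)).symm (y ∘ Sum.inr)‖ ^ 2 := by
  simp only [EuclideanSpace.norm_eq, WithLp.equiv_symm_apply, PiLp.toLp_apply, Function.comp_apply]
  rw [Real.sq_sqrt (by positivity), Real.sq_sqrt (by positivity), Real.sq_sqrt (by positivity),
    Fintype.sum_sum_type]

lemma norm_elim_zero_right (v : m → ℂ) :
    ‖(WithLp.equiv 2 ((m ⊕ p) → ℂ)).symm (Sum.elim v 0)‖ =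
      ‖(WithLp.equiv 2 (m → ℂ)).symm v‖ := by
  simp [EuclideanSpace.norm_eq, Fintype.sum_sum_type]

lemma norm_elim_zero_left (v : p → ℂ) :
    ‖(WithLp.equiv 2 ((m ⊕ p) → ℂ)).symm (Sum.elim 0 v)‖ =
      ‖(WithLp.equiv 2 (p → ℂ)).symm v‖ := by
  simp [EuclideanSpace.norm_eq, Fintype.sum_sum_type]

lemma fromBlocks_diag_norm (M : Matrix m n ℂ) (N : Matrix p q ℂ) :
    ‖Matrix.fromBlocks M 0 0 N‖ = max ‖M‖ ‖N‖ := by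
  refine le_antisymm ?_ (max_le ?_ ?_)
  · refine opnorm_le_of _ _ (le_trans (norm_nonneg M) (le_max_left _ _)) fun x => ?_
    have hx : x = Sum.elim (x ∘ Sum.inl) (x ∘ Sum.inr) := by ext (i | i) <;> rfl
    rw [hx, Matrix.fromBlocks_mulVec]
    simp only [Matrix.zero_mulVec, add_zero, zero_add]
    set x1 := x ∘ Sum.inl
    set x2 := x ∘ Sum.inr
    have h1 := mulVec_le M x1
    have h2 := mulVec_le N x2
    set c := max ‖M‖ ‖N‖ with hc
    have hM : ‖M‖ ≤ c := le_max_left _ _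
    have hN : ‖N‖ ≤ c := le_max_right _ _
    have hc0 : 0 ≤ c := le_trans (norm_nonneg M) hM
    have key : ‖(WithLp.equiv 2 ((m ⊕ p) → ℂ)).symm (Sum.elim (M *ᵥ x1) (N *ᵥ x2))‖ ^ 2 ≤
        (c * ‖(WithLp.equiv 2 ((n ⊕ q) → ℂ)).symm (Sum.elim x1 x2)‖) ^ 2 := by
      rw [sum_norm_sq, mul_pow, sum_norm_sq]
      have e1 : (Sum.elim (M *ᵥ x1) (N *ᵥ x2)) ∘ Sum.inl = M *ᵥ x1 := rfl
      have e2 : (Sum.elim (M *ᵥ x1) (N *ᵥ x2)) ∘ Sum.inr = N *ᵥ x2 := rfl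
      have e3 : (Sum.elim x1 x2 : (n ⊕ q) → ℂ) ∘ Sum.inl = x1 := rfl
      have e4 : (Sum.elim x1 x2 : (n ⊕ q) → ℂ) ∘ Sum.inr = x2 := rfl
      rw [e1, e2, e3, e4]
      have p1 : ‖(WithLp.equiv 2 (m → ℂ)).symm (M *ᵥ x1)‖ ^ 2 ≤
          (‖M‖ * ‖(WithLp.equiv 2 (n → ℂ)).symm x1‖) ^ 2 :=
        pow_le_pow_left₀ (norm_nonneg _) h1 2
      have p2 : (‖M‖ * ‖(WithLp.equiv 2 (n → ℂ)).symm x1‖) ^ 2 ≤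
          c ^ 2 * ‖(WithLp.equiv 2 (n → ℂ)).symm x1‖ ^ 2 := by
        rw [mul_pow]
        exact mul_le_mul_of_nonneg_right (pow_le_pow_left₀ (norm_nonneg M) hM 2) (sq_nonneg _)
      have p3 : ‖(WithLp.equiv 2 (p → ℂ)).symm (N *ᵥ x2)‖ ^ 2 ≤
          (‖N‖ * ‖(WithLp.equiv 2 (q → ℂ)).symm x2‖) ^ 2 :=
        pow_le_pow_left₀ (norm_nonneg _) h2 2
      have p4 : (‖N‖ * ‖(WithLp.equiv 2 (q → ℂ)).symm x2‖) ^ 2 ≤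
          c ^ 2 * ‖(WithLp.equiv 2 (q → ℂ)).symm x2‖ ^ 2 := by
        rw [mul_pow]
        exact mul_le_mul_of_nonneg_right (pow_le_pow_left₀ (norm_nonneg N) hN 2) (sq_nonneg _)
      linarith
    have hnn : 0 ≤ c * ‖(WithLp.equiv 2 ((n ⊕ q) → ℂ)).symm (Sum.elim x1 x2)‖ :=
      mul_nonneg hc0 (norm_nonneg _)
    calc ‖(WithLp.equiv 2 ((m ⊕ p) → ℂ)).symm (Sum.elim (M *ᵥ x1) (N *ᵥ x2))‖
        = Real.sqrt (‖(WithLp.equiv 2 ((m ⊕ p) → ℂ)).symm (Sum.elim (M *ᵥ x1) (N *ᵥ x2))‖ ^ 2) :=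
          (Real.sqrt_sq (norm_nonneg _)).symm
      _ ≤ Real.sqrt ((c * ‖(WithLp.equiv 2 ((n ⊕ q) → ℂ)).symm (Sum.elim x1 x2)‖) ^ 2) :=
          Real.sqrt_le_sqrt key
      _ = _ := Real.sqrt_sq hnn
  · refine opnorm_le_of _ _ (norm_nonneg _) fun x => ?_
    have h := mulVec_le (Matrix.fromBlocks M 0 0 N) (Sum.elim x (0 : q → ℂ))
    simp only [Matrix.fromBlocks_mulVec, Sum.elim_comp_inl, Sum.elim_comp_inr,
      Matrix.zero_mulVec, Matrix.mulVec_zero, add_zero, zero_add] at h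
    rwa [norm_elim_zero_right, norm_elim_zero_right] at h
  · refine opnorm_le_of _ _ (norm_nonneg _) fun x => ?_
    have h := mulVec_le (Matrix.fromBlocks M 0 0 N) (Sum.elim (0 : n → ℂ) x)
    simp only [Matrix.fromBlocks_mulVec, Sum.elim_comp_inl, Sum.elim_comp_inr,
      Matrix.zero_mulVec, Matrix.mulVec_zero, add_zero, zero_add] at h
    rwa [norm_elim_zero_left, norm_elim_zero_left] at h

end AuxNorm
namespace BallAux

/-- Row index equivalence for `Λ_E`. -/
def eqE (s n : ℕ) : (Fin 3 × Fin s) × Fin n ≃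
    ((Fin s × Fin n) ⊕ ((Fin s × Fin n) ⊕ (Fin s × Fin n))) where
  toFun p := ![Sum.inl (p.1.2, p.2), Sum.inr (Sum.inr (p.1.2, p.2)),
    Sum.inr (Sum.inl (p.1.2, p.2))] p.1.1
  invFun x := x.elim (fun ik => ((0, ik.1), ik.2))
    (fun y => y.elim (fun ik => ((2, ik.1), ik.2)) (fun ik => ((1, ik.1), ik.2)))
  left_inv := by rintro ⟨⟨a, i⟩, k⟩; fin_cases a <;> rfl
  right_inv := by rintro (⟨i, k⟩ | (⟨i, k⟩ | ⟨i, k⟩)) <;> rfl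

/-- Column index equivalence for `Λ_E`. -/
def fqE (s n : ℕ) : (Fin 3 × Fin s) × Fin n ≃
    (((Fin s × Fin n) ⊕ (Fin s × Fin n)) ⊕ (Fin s × Fin n)) where
  toFun p := ![Sum.inl (Sum.inl (p.1.2, p.2)), Sum.inl (Sum.inr (p.1.2, p.2)),
    Sum.inr (p.1.2, p.2)] p.1.1
  invFun x := x.elim (fun y => y.elim (fun jl => ((0, jl.1), jl.2)) (fun jl => ((1, jl.1), jl.2)))
    (fun jl => ((2, jl.1), jl.2))
  left_inv := by rintro ⟨⟨a, i⟩, k⟩; fin_cases a <;> rfl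
  right_inv := by rintro ((⟨i, k⟩ | ⟨i, k⟩) | ⟨i, k⟩) <;> rfl

/-- Row index equivalence for `Λ_R`. -/
def eqR (s n : ℕ) : (Fin 4 × Fin s) × Fin n ≃
    (((Fin s × Fin n) ⊕ ((Fin s × Fin n) ⊕ (Fin s × Fin n))) ⊕ (Fin s × Fin n)) where
  toFun p := ![Sum.inl (Sum.inl (p.1.2, p.2)), Sum.inl (Sum.inr (Sum.inr (p.1.2, p.2))),
    Sum.inl (Sum.inr (Sum.inl (p.1.2, p.2))), Sum.inr (p.1.2, p.2)] p.1.1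
  invFun x := x.elim (fun y => y.elim (fun ik => ((0, ik.1), ik.2))
      (fun z => z.elim (fun ik => ((2, ik.1), ik.2)) (fun ik => ((1, ik.1), ik.2))))
    (fun ik => ((3, ik.1), ik.2))
  left_inv := by rintro ⟨⟨a, i⟩, k⟩; fin_cases a <;> rfl
  right_inv := by rintro ((⟨i, k⟩ | (⟨i, k⟩ | ⟨i, k⟩)) | ⟨i, k⟩) <;> rfl

/-- Column index equivalence for `Λ_R`. -/
def fqR (s n : ℕ) : (Fin 4 × Fin s) × Fin n ≃
    ((((Fin s × Fin n) ⊕ (Fin s × Fin n)) ⊕ (Fin s × Fin n)) ⊕ (Fin s × Fin n)) where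
  toFun p := ![Sum.inr (p.1.2, p.2), Sum.inl (Sum.inl (Sum.inl (p.1.2, p.2))),
    Sum.inl (Sum.inl (Sum.inr (p.1.2, p.2))), Sum.inl (Sum.inr (p.1.2, p.2))] p.1.1
  invFun x := x.elim (fun y => y.elim (fun z => z.elim (fun jl => ((1, jl.1), jl.2))
      (fun jl => ((2, jl.1), jl.2))) (fun jl => ((3, jl.1), jl.2)))
    (fun jl => ((0, jl.1), jl.2))
  left_inv := by rintro ⟨⟨a, i⟩, k⟩; fin_cases a <;> rfl
  right_inv := by rintro (((⟨i, k⟩ | ⟨i, k⟩) | ⟨i, k⟩) | ⟨i, k⟩) <;> rfl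

end BallAux
open scoped ComplexOrder Kronecker Matrix Matrix.Norms.L2Operator

noncomputable section

/-- The matrix `R₁`. -/
def Rmat1 {s : ℕ} (C1 : Matrix (Fin s) (Fin s) ℂ) :
    Matrix (Fin 4 × Fin s) (Fin 4 × Fin s) ℂ :=
  blockMat ![![0, C1, 0, 0], ![0, 0, 0, 0], ![0, 0, 0, C1], ![0, 0, 0, 0]]

/-- The matrix `R₂`. -/
def Rmat2 {s : ℕ} (C2 : Matrix (Fin s) (Fin s) ℂ) :
    Matrix (Fin 4 × Fin s) (Fin 4 × Fin s) ℂ :=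
  blockMat ![![0, 0, C2, 0], ![0, 0, 0, C2], ![0, 0, 0, 0], ![0, 0, 0, 0]]

/-- The matrix `E₁`. -/
def Emat1 {s : ℕ} (C1 : Matrix (Fin s) (Fin s) ℂ) :
    Matrix (Fin 3 × Fin s) (Fin 3 × Fin s) ℂ :=
  blockMat ![![C1, 0, 0], ![0, 0, 0], ![0, 0, C1]]

/-- The matrix `E₂`. -/
def Emat2 {s : ℕ} (C2 : Matrix (Fin s) (Fin s) ℂ) :
    Matrix (Fin 3 × Fin s) (Fin 3 × Fin s) ℂ :=
  blockMat ![![0, C2, 0], ![0, 0, C2], ![0, 0, 0]]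

/-- Proposition 2.6 (first part): `𝓑_R = 𝓑_E = 𝓑_{E^r} ∩ 𝓑_{E^c}`. -/
theorem ball_R_eq_ball_E_eq_inter {s : ℕ} (hs : 0 < s)
    (C1 C2 : Matrix (Fin s) (Fin s) ℂ) {n : ℕ} (X : Mat n × Mat n) :
    [‖Rmat1 C1 ⊗ₖ X.1 + Rmat2 C2 ⊗ₖ X.2‖ < 1,
      ‖Emat1 C1 ⊗ₖ X.1 + Emat2 C2 ⊗ₖ X.2‖ < 1,
      (‖Matrix.fromCols C1 0 ⊗ₖ X.1 + Matrix.fromCols 0 C2 ⊗ₖ X.2‖ < 1 ∧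
        ‖Matrix.fromRows C1 0 ⊗ₖ X.1 + Matrix.fromRows 0 C2 ⊗ₖ X.2‖ < 1)].TFAE := by
  classical
  set A : Matrix (Fin s × Fin n) (Fin s × Fin n) ℂ := C1 ⊗ₖ X.1 with hA
  set B : Matrix (Fin s × Fin n) (Fin s × Fin n) ℂ := C2 ⊗ₖ X.2 with hB
  set Row : Matrix (Fin s × Fin n) ((Fin s × Fin n) ⊕ (Fin s × Fin n)) ℂ :=
    Matrix.fromCols A B with hRow
  set Col : Matrix ((Fin s × Fin n) ⊕ (Fin s × Fin n)) (Fin s × Fin n) ℂ :=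
    Matrix.fromRows A B with hCol
  -- identification of the third pair of matrices
  have h3a : Matrix.fromCols C1 0 ⊗ₖ X.1 + Matrix.fromCols 0 C2 ⊗ₖ X.2 =
      Row.submatrix (Equiv.refl (Fin s × Fin n))
        (Equiv.sumProdDistrib (Fin s) (Fin s) (Fin n)) := by
    ext ⟨i, k⟩ ⟨c, l⟩
    rcases c with j | j <;>
      simp [hRow, hA, hB, Matrix.fromCols, Matrix.submatrix_apply,
        Equiv.sumProdDistrib, Matrix.kroneckerMap_apply]
  have h3b : Matrix.fromRows C1 0 ⊗ₖ X.1 + Matrix.fromRows 0 C2 ⊗ₖ X.2 =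
      Col.submatrix (Equiv.sumProdDistrib (Fin s) (Fin s) (Fin n))
        (Equiv.refl (Fin s × Fin n)) := by
    ext ⟨c, k⟩ ⟨j, l⟩
    rcases c with i | i <;>
      simp [hCol, hA, hB, Matrix.submatrix_apply,
        Equiv.sumProdDistrib, Matrix.kroneckerMap_apply, Matrix.fromRows_apply_inl, Matrix.fromRows_apply_inr]
  -- identification of Λ_E
  have hE : Emat1 C1 ⊗ₖ X.1 + Emat2 C2 ⊗ₖ X.2 =
      (Matrix.fromBlocks Row 0 0 Col).submatrix (BallAux.eqE s n) (BallAux.fqE s n) := by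
    ext ⟨⟨a, i⟩, k⟩ ⟨⟨b, j⟩, l⟩
    fin_cases a <;> fin_cases b <;>
      simp only [Emat1, Emat2, blockMat, cons_val', cons_val_fin_one, Fin.zero_eta, Fin.isValue,
        Fin.mk_one, Fin.reduceFinMk, Matrix.add_apply, kroneckerMap_apply, of_apply, cons_val,
        cons_val_one, cons_val_zero, Matrix.zero_apply, zero_mul, mul_zero, zero_add, add_zero, hRow,
        hCol, hA, hB, fromCols, BallAux.eqE, BallAux.fqE, Nat.succ_eq_add_one, Nat.reduceAdd,
        Equiv.coe_fn_mk, submatrix_apply, fromBlocks_apply₁₁, fromBlocks_apply₁₂, fromBlocks_apply₂₁,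
        fromBlocks_apply₂₂, Sum.elim_inl, Sum.elim_inr, fromRows_apply_inl, fromRows_apply_inr]
  -- identification of Λ_R
  have hR : Rmat1 C1 ⊗ₖ X.1 + Rmat2 C2 ⊗ₖ X.2 =
      (Matrix.fromBlocks (Matrix.fromBlocks Row 0 0 Col) 0 0
        (0 : Matrix (Fin s × Fin n) (Fin s × Fin n) ℂ)).submatrix
        (BallAux.eqR s n) (BallAux.fqR s n) := by
    ext ⟨⟨a, i⟩, k⟩ ⟨⟨b, j⟩, l⟩
    fin_cases a <;> fin_cases b <;>
      simp only [Rmat1, Rmat2, blockMat, cons_val', cons_val_fin_one, Fin.zero_eta, Fin.isValue,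
        Fin.mk_one, Fin.reduceFinMk, Matrix.add_apply, kroneckerMap_apply, of_apply, cons_val,
        cons_val_one, cons_val_zero, Matrix.zero_apply, zero_mul, mul_zero, zero_add, add_zero, hRow,
        hCol, hA, hB, fromCols, BallAux.eqR, BallAux.fqR, Nat.succ_eq_add_one, Nat.reduceAdd,
        Equiv.coe_fn_mk, submatrix_apply, fromBlocks_apply₁₁, fromBlocks_apply₁₂, fromBlocks_apply₂₁,
        fromBlocks_apply₂₂, Sum.elim_inl, Sum.elim_inr, fromRows_apply_inl, fromRows_apply_inr]
  -- norm computations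
  have hra : ‖Matrix.fromCols C1 0 ⊗ₖ X.1 + Matrix.fromCols 0 C2 ⊗ₖ X.2‖ = ‖Row‖ := by
    rw [h3a]; exact AuxNorm.submatrix_norm _ _ _
  have hrb : ‖Matrix.fromRows C1 0 ⊗ₖ X.1 + Matrix.fromRows 0 C2 ⊗ₖ X.2‖ = ‖Col‖ := by
    rw [h3b]; exact AuxNorm.submatrix_norm _ _ _
  have hne : ‖Emat1 C1 ⊗ₖ X.1 + Emat2 C2 ⊗ₖ X.2‖ = max ‖Row‖ ‖Col‖ := by
    rw [hE, AuxNorm.submatrix_norm, AuxNorm.fromBlocks_diag_norm]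
  have hnr : ‖Rmat1 C1 ⊗ₖ X.1 + Rmat2 C2 ⊗ₖ X.2‖ = max ‖Row‖ ‖Col‖ := by
    rw [hR, AuxNorm.submatrix_norm, AuxNorm.fromBlocks_diag_norm,
      AuxNorm.fromBlocks_diag_norm, norm_zero]
    exact max_eq_left (le_trans (norm_nonneg Row) (le_max_left _ _))
  tfae_have 1 ↔ 2 := by rw [hne, hnr]
  tfae_have 2 ↔ 3 := by rw [hne, hra, hrb]; exact max_lt_iff
  tfae_finish
end
end
end

section
/- Suppose the s×s matrices C₁ and C₂ have operator norm 1 and are invertible. Then B_{E^r}[2] is not contained in B_{E^c}[2] and B_{E^c}[2] is not contained in B_{E^r}[2]: there exists X ∈ M₂(ℂ)² with ‖Λ_{E^r}(X)‖ < 1 but ‖Λ_{E^c}(X)‖ ≥ 1, and there exists X' ∈ M₂(ℂ)² with ‖Λ_{E^c}(X')‖ < 1 but ‖Λ_{E^r}(X')‖ ≥ 1. -/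
open scoped ComplexOrder Kronecker Matrix Matrix.Norms.L2Operator

noncomputable section

section Auxiliary

open Matrix

variable {s : ℕ}


lemma my_l2_opNorm_le_bound {m n : Type*} [Fintype m] [Fintype n] [DecidableEq n]
    (A : Matrix m n ℂ) {c : ℝ} (hc : 0 ≤ c)
    (h : ∀ v : EuclideanSpace ℂ n,
      ‖(WithLp.equiv 2 (m → ℂ)).symm (A *ᵥ (WithLp.equiv 2 (n → ℂ) v))‖ ≤ c * ‖v‖) :
    ‖A‖ ≤ c := by
  rw [Matrix.l2_opNorm_def]
  exact ContinuousLinearMap.opNorm_le_bound _ hc h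

lemma my_l2_opNorm_mulVec' {m n : Type*} [Fintype m] [Fintype n] [DecidableEq n]
    (A : Matrix m n ℂ) (v : EuclideanSpace ℂ n) :
    ‖(WithLp.equiv 2 (m → ℂ)).symm (A *ᵥ (WithLp.equiv 2 (n → ℂ) v))‖ ≤ ‖A‖ * ‖v‖ :=
  Matrix.l2_opNorm_mulVec A v

variable {s : ℕ}

def XA (α : ℝ) : Matrix (Fin 2) (Fin 2) ℂ := !![0, (α:ℂ); 0, 0]
def XB (β : ℝ) : Matrix (Fin 2) (Fin 2) ℂ := !![0, 0; 0, (β:ℂ)]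

lemma rowM_mulVec (A B : Matrix (Fin s) (Fin s) ℂ) (α β : ℝ)
    (v : ((Fin s ⊕ Fin s) × Fin 2) → ℂ) (i : Fin s) (a : Fin 2) :
    ((fromCols A 0 ⊗ₖ XA α + fromCols 0 B ⊗ₖ XB β) *ᵥ v) (i, a) =
      if a = 0 then (α:ℂ) * (A *ᵥ fun j => v (Sum.inl j, 1)) i
      else (β:ℂ) * (B *ᵥ fun j => v (Sum.inr j, 1)) i := by
  simp only [mulVec, dotProduct, Fintype.sum_prod_type, Fintype.sum_sum_type,
    Matrix.add_apply, kroneckerMap_apply, fromCols_apply_inl, fromCols_apply_inr,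
    Matrix.zero_apply, Fin.sum_univ_two, XA, XB]
  fin_cases a <;>
    simp [Finset.mul_sum, mul_comm, mul_assoc, mul_left_comm]

lemma colM_mulVec_inl (A B : Matrix (Fin s) (Fin s) ℂ) (α β : ℝ)
    (v : (Fin s × Fin 2) → ℂ) (i : Fin s) (a : Fin 2) :
    ((fromRows A 0 ⊗ₖ XA α + fromRows 0 B ⊗ₖ XB β) *ᵥ v) (Sum.inl i, a) =
      if a = 0 then (α:ℂ) * (A *ᵥ fun j => v (j, 1)) i else 0 := by
  simp only [mulVec, dotProduct, Fintype.sum_prod_type,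
    Matrix.add_apply, kroneckerMap_apply, fromRows_apply_inl, fromRows_apply_inr,
    Matrix.zero_apply, Fin.sum_univ_two, XA, XB]
  fin_cases a <;>
    simp [Finset.mul_sum, mul_comm, mul_assoc, mul_left_comm]

lemma colM_mulVec_inr (A B : Matrix (Fin s) (Fin s) ℂ) (α β : ℝ)
    (v : (Fin s × Fin 2) → ℂ) (i : Fin s) (a : Fin 2) :
    ((fromRows A 0 ⊗ₖ XA α + fromRows 0 B ⊗ₖ XB β) *ᵥ v) (Sum.inr i, a) =
      if a = 1 then (β:ℂ) * (B *ᵥ fun j => v (j, 1)) i else 0 := by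
  simp only [mulVec, dotProduct, Fintype.sum_prod_type,
    Matrix.add_apply, kroneckerMap_apply, fromRows_apply_inl, fromRows_apply_inr,
    Matrix.zero_apply, Fin.sum_univ_two, XA, XB]
  fin_cases a <;>
    simp [Finset.mul_sum, mul_comm, mul_assoc, mul_left_comm]

lemma sqsum_eq {ι : Type*} [Fintype ι] (x : ι → ℂ) :
    ‖(WithLp.equiv 2 (ι → ℂ)).symm x‖ ^ 2 = ∑ i, ‖x i‖ ^ 2 := by
  rw [EuclideanSpace.norm_eq, Real.sq_sqrt (by positivity)]
  simp

lemma sqsum_mulVec_le {m n : Type*} [Fintype m] [Fintype n] [DecidableEq n]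
    (A : Matrix m n ℂ) (w : n → ℂ) :
    ∑ i, ‖(A *ᵥ w) i‖ ^ 2 ≤ ‖A‖ ^ 2 * ∑ j, ‖w j‖ ^ 2 := by
  have h := my_l2_opNorm_mulVec' A ((WithLp.equiv 2 (n → ℂ)).symm w)
  simp only [Equiv.apply_symm_apply] at h
  have h2 := mul_self_le_mul_self (norm_nonneg _) h
  rw [← pow_two, ← pow_two] at h2
  calc ∑ i, ‖(A *ᵥ w) i‖ ^ 2 = ‖(WithLp.equiv 2 (m → ℂ)).symm (A *ᵥ w)‖ ^ 2 := (sqsum_eq _).symm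
    _ ≤ (‖A‖ * ‖(WithLp.equiv 2 (n → ℂ)).symm w‖) ^ 2 := h2
    _ = ‖A‖ ^ 2 * ∑ j, ‖w j‖ ^ 2 := by rw [mul_pow, sqsum_eq]

lemma rowM_norm_le (A B : Matrix (Fin s) (Fin s) ℂ) (hA : ‖A‖ ≤ 1) (hB : ‖B‖ ≤ 1)
    {α β : ℝ} (hα : 0 ≤ α) (hβ : 0 ≤ β) :
    ‖fromCols A 0 ⊗ₖ XA α + fromCols 0 B ⊗ₖ XB β‖ ≤ max α β := by
  set m := max α β with hm
  have hm0 : 0 ≤ m := le_trans hα (le_max_left _ _)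
  apply my_l2_opNorm_le_bound _ hm0
  intro v
  set v' : ((Fin s ⊕ Fin s) × Fin 2) → ℂ := WithLp.equiv 2 _ v with hv'
  set w₁ : Fin s → ℂ := fun j => v' (Sum.inl j, 1)
  set w₂ : Fin s → ℂ := fun j => v' (Sum.inr j, 1)
  have hS : ∑ p : Fin s × Fin 2,
      ‖((fromCols A 0 ⊗ₖ XA α + fromCols 0 B ⊗ₖ XB β) *ᵥ v') p‖ ^ 2
      = α ^ 2 * (∑ i, ‖(A *ᵥ w₁) i‖ ^ 2) + β ^ 2 * (∑ i, ‖(B *ᵥ w₂) i‖ ^ 2) := by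
    rw [Fintype.sum_prod_type]
    simp only [Fin.sum_univ_two, rowM_mulVec]
    simp [Finset.sum_add_distrib, Finset.mul_sum, mul_pow, abs_of_nonneg, hα, hβ,
      norm_mul, Complex.norm_real, Real.norm_eq_abs, mul_comm, mul_left_comm]
    rfl
  have hT : (∑ j, ‖w₁ j‖ ^ 2) + (∑ j, ‖w₂ j‖ ^ 2) ≤ ∑ p : (Fin s ⊕ Fin s) × Fin 2, ‖v' p‖ ^ 2 := by
    rw [Fintype.sum_prod_type, Fintype.sum_sum_type]
    simp only [Fin.sum_univ_two]
    have h1 : ∑ j, ‖w₁ j‖ ^ 2 ≤ ∑ j, (‖v' (Sum.inl j, 0)‖ ^ 2 + ‖v' (Sum.inl j, 1)‖ ^ 2) :=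
      Finset.sum_le_sum fun j _ => le_add_of_nonneg_left (by positivity)
    have h2 : ∑ j, ‖w₂ j‖ ^ 2 ≤ ∑ j, (‖v' (Sum.inr j, 0)‖ ^ 2 + ‖v' (Sum.inr j, 1)‖ ^ 2) :=
      Finset.sum_le_sum fun j _ => le_add_of_nonneg_left (by positivity)
    linarith
  have hA2 := sqsum_mulVec_le A w₁
  have hB2 := sqsum_mulVec_le B w₂
  have hA2' : ∑ i, ‖(A *ᵥ w₁) i‖ ^ 2 ≤ ∑ j, ‖w₁ j‖ ^ 2 := by
    have hq : (0:ℝ) ≤ ∑ j, ‖w₁ j‖ ^ 2 := by positivity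
    have h1 : ‖A‖ ^ 2 ≤ 1 := by nlinarith [norm_nonneg A]
    have h2 := mul_le_mul_of_nonneg_right h1 hq
    rw [one_mul] at h2
    linarith
  have hB2' : ∑ i, ‖(B *ᵥ w₂) i‖ ^ 2 ≤ ∑ j, ‖w₂ j‖ ^ 2 := by
    have hq : (0:ℝ) ≤ ∑ j, ‖w₂ j‖ ^ 2 := by positivity
    have h1 : ‖B‖ ^ 2 ≤ 1 := by nlinarith [norm_nonneg B]
    have h2 := mul_le_mul_of_nonneg_right h1 hq
    rw [one_mul] at h2
    linarith
  have key : ∑ p : Fin s × Fin 2,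
      ‖((fromCols A 0 ⊗ₖ XA α + fromCols 0 B ⊗ₖ XB β) *ᵥ v') p‖ ^ 2
      ≤ m ^ 2 * ∑ p : (Fin s ⊕ Fin s) × Fin 2, ‖v' p‖ ^ 2 := by
    rw [hS]
    have hαm : α ≤ m := le_max_left _ _
    have hβm : β ≤ m := le_max_right _ _
    have q1 : 0 ≤ ∑ i, ‖(A *ᵥ w₁) i‖ ^ 2 := by positivity
    have q2 : 0 ≤ ∑ i, ‖(B *ᵥ w₂) i‖ ^ 2 := by positivity
    have q3 : 0 ≤ ∑ j, ‖w₁ j‖ ^ 2 := by positivity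
    have q4 : 0 ≤ ∑ j, ‖w₂ j‖ ^ 2 := by positivity
    have hα2 : α ^ 2 ≤ m ^ 2 := by nlinarith
    have hβ2 : β ^ 2 ≤ m ^ 2 := by nlinarith
    have k1 : α ^ 2 * (∑ i, ‖(A *ᵥ w₁) i‖ ^ 2) ≤ m ^ 2 * ∑ j, ‖w₁ j‖ ^ 2 :=
      mul_le_mul hα2 hA2' q1 (by positivity)
    have k2 : β ^ 2 * (∑ i, ‖(B *ᵥ w₂) i‖ ^ 2) ≤ m ^ 2 * ∑ j, ‖w₂ j‖ ^ 2 :=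
      mul_le_mul hβ2 hB2' q2 (by positivity)
    have k3 : m ^ 2 * ((∑ j, ‖w₁ j‖ ^ 2) + (∑ j, ‖w₂ j‖ ^ 2))
        ≤ m ^ 2 * ∑ p : (Fin s ⊕ Fin s) × Fin 2, ‖v' p‖ ^ 2 :=
      mul_le_mul_of_nonneg_left hT (by positivity)
    linarith
  calc ‖(WithLp.equiv 2 _).symm ((fromCols A 0 ⊗ₖ XA α + fromCols 0 B ⊗ₖ XB β) *ᵥ v')‖
      = Real.sqrt (∑ p : Fin s × Fin 2,
        ‖((fromCols A 0 ⊗ₖ XA α + fromCols 0 B ⊗ₖ XB β) *ᵥ v') p‖ ^ 2) := by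
        rw [EuclideanSpace.norm_eq]; rfl
    _ ≤ Real.sqrt (m ^ 2 * ∑ p : (Fin s ⊕ Fin s) × Fin 2, ‖v' p‖ ^ 2) := Real.sqrt_le_sqrt key
    _ = m * ‖v‖ := by
        rw [Real.sqrt_mul (sq_nonneg m), Real.sqrt_sq hm0, EuclideanSpace.norm_eq]
        rfl

lemma colM_sq_lower (A B : Matrix (Fin s) (Fin s) ℂ) {α β : ℝ} (hα : 0 ≤ α) (hβ : 0 ≤ β)
    (w : Fin s → ℂ) :
    α ^ 2 * (∑ i, ‖(A *ᵥ w) i‖ ^ 2) + β ^ 2 * (∑ i, ‖(B *ᵥ w) i‖ ^ 2) ≤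
      ‖fromRows A 0 ⊗ₖ XA α + fromRows 0 B ⊗ₖ XB β‖ ^ 2 * ∑ j, ‖w j‖ ^ 2 := by
  set N := fromRows A 0 ⊗ₖ XA α + fromRows 0 B ⊗ₖ XB β with hN
  set v : (Fin s × Fin 2) → ℂ := fun p => if p.2 = 1 then w p.1 else 0 with hv
  have hmv := my_l2_opNorm_mulVec' N ((WithLp.equiv 2 _).symm v)
  rw [Equiv.apply_symm_apply] at hmv
  have h2 := mul_self_le_mul_self (norm_nonneg _) hmv
  rw [← pow_two, ← pow_two, mul_pow, sqsum_eq, sqsum_eq] at h2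
  have hL : ∑ p : (Fin s ⊕ Fin s) × Fin 2, ‖(N *ᵥ v) p‖ ^ 2 =
      α ^ 2 * (∑ i, ‖(A *ᵥ w) i‖ ^ 2) + β ^ 2 * (∑ i, ‖(B *ᵥ w) i‖ ^ 2) := by
    rw [Fintype.sum_prod_type, Fintype.sum_sum_type]
    simp only [Fin.sum_univ_two, hN, colM_mulVec_inl, colM_mulVec_inr, hv]
    simp [Finset.sum_add_distrib, Finset.mul_sum, mul_pow, abs_of_nonneg, hα, hβ,
      norm_mul, Complex.norm_real, Real.norm_eq_abs]
  have hR : ∑ p : Fin s × Fin 2, ‖v p‖ ^ 2 = ∑ j, ‖w j‖ ^ 2 := by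
    rw [Fintype.sum_prod_type]
    simp [Fin.sum_univ_two, hv]
  rw [hL, hR] at h2
  exact h2

lemma l2_opNorm_le_of_sq {m n : Type*} [Fintype m] [Fintype n] [DecidableEq n]
    (A : Matrix m n ℂ) {k : ℝ} (hk : 0 ≤ k)
    (h : ∀ w : n → ℂ, ∑ i, ‖(A *ᵥ w) i‖ ^ 2 ≤ k ^ 2 * ∑ j, ‖w j‖ ^ 2) : ‖A‖ ≤ k := by
  apply my_l2_opNorm_le_bound _ hk
  intro v
  have h1 := h (WithLp.equiv 2 (n → ℂ) v)
  have h2 : ‖(WithLp.equiv 2 (m → ℂ)).symm (A *ᵥ (WithLp.equiv 2 (n → ℂ)) v)‖ ^ 2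
      ≤ (k * ‖v‖) ^ 2 := by
    rw [sqsum_eq, mul_pow]
    calc ∑ i, ‖(A *ᵥ (WithLp.equiv 2 (n → ℂ)) v) i‖ ^ 2
        ≤ k ^ 2 * ∑ j, ‖(WithLp.equiv 2 (n → ℂ) v) j‖ ^ 2 := h1
      _ = k ^ 2 * ‖v‖ ^ 2 := by
          congr 1
          rw [← sqsum_eq]
          congr 1
  have := Real.sqrt_le_sqrt h2
  rwa [Real.sqrt_sq (norm_nonneg _), Real.sqrt_sq (by positivity)] at this

lemma exists_sing_lower (C : Matrix (Fin s) (Fin s) ℂ) (hinv : IsUnit C) :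
    ∃ δ : ℝ, 0 < δ ∧ δ ≤ 1 ∧
      ∀ w : Fin s → ℂ, δ ^ 2 * ∑ j, ‖w j‖ ^ 2 ≤ ∑ i, ‖(C *ᵥ w) i‖ ^ 2 := by
  have hdet : IsUnit C.det := (Matrix.isUnit_iff_isUnit_det C).mp hinv
  have hkey : ∀ w : Fin s → ℂ, ∑ j, ‖w j‖ ^ 2 ≤ ‖C⁻¹‖ ^ 2 * ∑ i, ‖(C *ᵥ w) i‖ ^ 2 := by
    intro w
    have := sqsum_mulVec_le C⁻¹ (C *ᵥ w)
    rwa [Matrix.mulVec_mulVec, Matrix.nonsing_inv_mul C hdet, Matrix.one_mulVec] at this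
  by_cases hc : ‖C⁻¹‖ = 0
  · refine ⟨1, one_pos, le_refl 1, fun w => ?_⟩
    have h1 := hkey w
    rw [hc] at h1
    have h2 : (0:ℝ) ≤ ∑ j, ‖w j‖ ^ 2 := by positivity
    have h3 : (0:ℝ) ≤ ∑ i, ‖(C *ᵥ w) i‖ ^ 2 := by positivity
    nlinarith
  · have hc0 : 0 < ‖C⁻¹‖ := lt_of_le_of_ne (norm_nonneg _) (Ne.symm hc)
    refine ⟨min ‖C⁻¹‖⁻¹ 1, lt_min (by positivity) one_pos, min_le_right _ _, fun w => ?_⟩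
    have h1 := hkey w
    have hm : min ‖C⁻¹‖⁻¹ 1 ≤ ‖C⁻¹‖⁻¹ := min_le_left _ _
    have hm0 : 0 < min ‖C⁻¹‖⁻¹ 1 := lt_min (by positivity) one_pos
    have h2 : (min ‖C⁻¹‖⁻¹ 1) ^ 2 ≤ ‖C⁻¹‖⁻¹ ^ 2 := by nlinarith
    have h3 : (0:ℝ) ≤ ∑ j, ‖w j‖ ^ 2 := by positivity
    calc (min ‖C⁻¹‖⁻¹ 1) ^ 2 * ∑ j, ‖w j‖ ^ 2 ≤ ‖C⁻¹‖⁻¹ ^ 2 * ∑ j, ‖w j‖ ^ 2 :=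
          mul_le_mul_of_nonneg_right h2 h3
      _ ≤ ‖C⁻¹‖⁻¹ ^ 2 * (‖C⁻¹‖ ^ 2 * ∑ i, ‖(C *ᵥ w) i‖ ^ 2) :=
          mul_le_mul_of_nonneg_left h1 (by positivity)
      _ = ∑ i, ‖(C *ᵥ w) i‖ ^ 2 := by
          rw [← mul_assoc, ← mul_pow, inv_mul_cancel₀ hc, one_pow, one_mul]

set_option maxHeartbeats 1000000 in
lemma key_lemma {s : ℕ} (hs : 0 < s) (A B : Matrix (Fin s) (Fin s) ℂ)
    (hA : ‖A‖ = 1) (hB : ‖B‖ = 1) (hinvB : IsUnit B) :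
    ∃ X : Matrix (Fin 2) (Fin 2) ℂ × Matrix (Fin 2) (Fin 2) ℂ,
      ‖fromCols A 0 ⊗ₖ X.1 + fromCols 0 B ⊗ₖ X.2‖ < 1 ∧
        1 ≤ ‖fromRows A 0 ⊗ₖ X.1 + fromRows 0 B ⊗ₖ X.2‖ := by
  obtain ⟨δ, hδ0, hδ1, hδ⟩ := exists_sing_lower B hinvB
  set β : ℝ := δ / 2 with hβdef
  set α : ℝ := Real.sqrt (1 - δ ^ 4 / 8) with hαdef
  have hδ4 : δ ^ 4 ≤ 1 := pow_le_one₀ (le_of_lt hδ0) hδ1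
  have hδ4' : 0 < δ ^ 4 := by positivity
  have hpos : (0:ℝ) < 1 - δ ^ 4 / 8 := by nlinarith
  have hα0 : 0 < α := Real.sqrt_pos.mpr hpos
  have hαsq : α ^ 2 = 1 - δ ^ 4 / 8 := Real.sq_sqrt (le_of_lt hpos)
  have hα1 : α < 1 := by nlinarith [hαsq, hα0, hδ4']
  have hβ0 : 0 ≤ β := by positivity
  have hβ1 : β < 1 := by nlinarith
  refine ⟨(XA α, XB β), ?_, ?_⟩
  · calc ‖fromCols A 0 ⊗ₖ XA α + fromCols 0 B ⊗ₖ XB β‖ ≤ max α β :=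
        rowM_norm_le A B (le_of_eq hA) (le_of_eq hB) (le_of_lt hα0) hβ0
      _ < 1 := max_lt hα1 hβ1
  · by_contra hcon
    push_neg at hcon
    set N := fromRows A 0 ⊗ₖ XA α + fromRows 0 B ⊗ₖ XB β with hN
    have hNn : 0 ≤ ‖N‖ := norm_nonneg _
    have hmain : ∀ w : Fin s → ℂ, α ^ 2 * (∑ i, ‖(A *ᵥ w) i‖ ^ 2) ≤
        (‖N‖ ^ 2 - β ^ 2 * δ ^ 2) * ∑ j, ‖w j‖ ^ 2 := by
      intro w
      have h1 := colM_sq_lower A B (le_of_lt hα0) hβ0 w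
      have h2 := hδ w
      have h3 : β ^ 2 * (δ ^ 2 * ∑ j, ‖w j‖ ^ 2) ≤ β ^ 2 * ∑ i, ‖(B *ᵥ w) i‖ ^ 2 :=
        mul_le_mul_of_nonneg_left h2 (by positivity)
      nlinarith [h1, h3]
    set c : ℝ := ‖N‖ ^ 2 - β ^ 2 * δ ^ 2 with hc
    have hc0 : 0 ≤ c := by
      set w₀ : Fin s → ℂ := fun j => if j = ⟨0, hs⟩ then 1 else 0 with hw₀
      have hsum : ∑ j, ‖w₀ j‖ ^ 2 = 1 := by
        rw [hw₀, Finset.sum_eq_single (⟨0, hs⟩ : Fin s)]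
        · simp
        · intro b _ hb; simp [hb]
        · simp
      have h1 := hmain w₀
      rw [hsum, mul_one] at h1
      have h2 : (0:ℝ) ≤ α ^ 2 * ∑ i, ‖(A *ᵥ w₀) i‖ ^ 2 := by positivity
      linarith
    have hkA : ‖A‖ ≤ Real.sqrt c / α := by
      apply l2_opNorm_le_of_sq _ (by positivity)
      intro w
      have h1 := hmain w
      have hsq : (Real.sqrt c / α) ^ 2 = c / α ^ 2 := by
        rw [div_pow, Real.sq_sqrt hc0]
      rw [hsq, div_mul_eq_mul_div, le_div_iff₀ (by positivity)]
      nlinarith [h1]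
    rw [hA] at hkA
    have hαc : α ≤ Real.sqrt c := by
      rwa [le_div_iff₀ hα0, one_mul] at hkA
    have hα2c : α ^ 2 ≤ c := by
      calc α ^ 2 ≤ Real.sqrt c ^ 2 := pow_le_pow_left₀ (le_of_lt hα0) hαc 2
        _ = c := Real.sq_sqrt hc0
    have hN1 : ‖N‖ ^ 2 < 1 := by nlinarith
    have hb : β ^ 2 * δ ^ 2 = δ ^ 4 / 4 := by rw [hβdef]; ring
    linarith

lemma kron_conjT {m n p q : Type*} (A : Matrix m n ℂ) (B : Matrix p q ℂ) :
    (A ⊗ₖ B)ᴴ = Aᴴ ⊗ₖ Bᴴ := by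
  ext ⟨i, a⟩ ⟨j, b⟩
  simp [Matrix.conjTranspose_apply, Matrix.kroneckerMap_apply, mul_comm]

lemma key_lemma' {s : ℕ} (hs : 0 < s) (A B : Matrix (Fin s) (Fin s) ℂ)
    (hA : ‖A‖ = 1) (hB : ‖B‖ = 1) (hinvB : IsUnit B) :
    ∃ X : Matrix (Fin 2) (Fin 2) ℂ × Matrix (Fin 2) (Fin 2) ℂ,
      ‖fromRows A 0 ⊗ₖ X.1 + fromRows 0 B ⊗ₖ X.2‖ < 1 ∧
        1 ≤ ‖fromCols A 0 ⊗ₖ X.1 + fromCols 0 B ⊗ₖ X.2‖ := by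
  have hA' : ‖Aᴴ‖ = 1 := by rw [Matrix.l2_opNorm_conjTranspose]; exact hA
  have hB' : ‖Bᴴ‖ = 1 := by rw [Matrix.l2_opNorm_conjTranspose]; exact hB
  obtain ⟨X, h1, h2⟩ := key_lemma hs Aᴴ Bᴴ hA' hB' (((Matrix.isUnit_conjTranspose B).mpr hinvB))
  refine ⟨(X.1ᴴ, X.2ᴴ), ?_, ?_⟩
  · have he : fromRows A 0 ⊗ₖ X.1ᴴ + fromRows 0 B ⊗ₖ X.2ᴴ =
        (fromCols Aᴴ 0 ⊗ₖ X.1 + fromCols 0 Bᴴ ⊗ₖ X.2)ᴴ := by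
      rw [Matrix.conjTranspose_add, kron_conjT, kron_conjT,
        Matrix.conjTranspose_fromCols_eq_fromRows_conjTranspose,
        Matrix.conjTranspose_fromCols_eq_fromRows_conjTranspose]
      simp
    rw [he, Matrix.l2_opNorm_conjTranspose]
    exact h1
  · have he : fromCols A 0 ⊗ₖ X.1ᴴ + fromCols 0 B ⊗ₖ X.2ᴴ =
        (fromRows Aᴴ 0 ⊗ₖ X.1 + fromRows 0 Bᴴ ⊗ₖ X.2)ᴴ := by
      rw [Matrix.conjTranspose_add, kron_conjT, kron_conjT,
        Matrix.conjTranspose_fromRows_eq_fromCols_conjTranspose,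
        Matrix.conjTranspose_fromRows_eq_fromCols_conjTranspose]
      simp
    rw [he, Matrix.l2_opNorm_conjTranspose]
    exact h2


end Auxiliary

/-- Proposition 2.6 (second part): at level two, neither of the spectraballs `𝓑_{E^r}` and
`𝓑_{E^c}` contains the other. -/
theorem ball_Er_ball_Ec_not_comparable {s : ℕ} (hs : 0 < s)
    (C1 C2 : Matrix (Fin s) (Fin s) ℂ) (hnorm1 : ‖C1‖ = 1) (hnorm2 : ‖C2‖ = 1)
    (hinv1 : IsUnit C1) (hinv2 : IsUnit C2) :
    (∃ X : Mat 2 × Mat 2,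
      ‖Matrix.fromCols C1 0 ⊗ₖ X.1 + Matrix.fromCols 0 C2 ⊗ₖ X.2‖ < 1 ∧
        1 ≤ ‖Matrix.fromRows C1 0 ⊗ₖ X.1 + Matrix.fromRows 0 C2 ⊗ₖ X.2‖) ∧
      (∃ X' : Mat 2 × Mat 2,
        ‖Matrix.fromRows C1 0 ⊗ₖ X'.1 + Matrix.fromRows 0 C2 ⊗ₖ X'.2‖ < 1 ∧
          1 ≤ ‖Matrix.fromCols C1 0 ⊗ₖ X'.1 + Matrix.fromCols 0 C2 ⊗ₖ X'.2‖) :=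
  ⟨key_lemma hs C1 C2 hnorm1 hnorm2 hinv2, key_lemma' hs C1 C2 hnorm1 hnorm2 hinv2⟩
end
end

section
/- Let s > 1, let C₁, C₂ ∈ M_s(ℂ) be invertible matrices such that the star subalgebra of M_s(ℂ) generated by {C₁*C₁, C₂*C₂} equals M_s(ℂ), let 𝔏 = (ℓ_{j,k}) ∈ M₂(ℂ) be invertible, and let b = (b₁,b₂) ∈ ℂ². Suppose −(ℓ_{1,1}·conj(ℓ_{1,2})·C₂^{−1}(C₂*)^{−1} + ℓ_{2,1}·conj(ℓ_{2,2})·C₁^{−1}(C₁*)^{−1}) = (ℓ_{1,1}b₂ − ℓ_{2,1}b₁)·conj(−ℓ_{1,2}b₂ + ℓ_{2,2}b₁)·I_s. Then b₁·conj(b₂) = 0, and either ℓ_{1,2} = 0 = ℓ_{2,1} or ℓ_{1,1} = 0 = ℓ_{2,2}. -/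
open scoped ComplexOrder Kronecker Matrix Matrix.Norms.L2Operator

noncomputable section

lemma scalar_of_commuting {s : ℕ} {S : Set (Mat s)} (hgen : StarAlgebra.adjoin ℂ S = ⊤)
    {Z : Mat s} (hZ : star Z = Z) (hcomm : ∀ W ∈ S, Commute Z W) :
    ∃ r : ℂ, Z = r • (1 : Mat s) := by
  have key : ∀ M : Mat s, Commute Z M := by
    intro M
    have hM : M ∈ StarAlgebra.adjoin ℂ S := by rw [hgen]; trivial
    induction hM using StarAlgebra.adjoin_induction with
    | mem x hx => exact hcomm x hx
    | algebraMap r => exact (Algebra.commutes r Z).symm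
    | add x y _ _ hx hy => exact hx.add_right hy
    | mul x y _ _ hx hy => exact hx.mul_right hy
    | star x _ hx =>
      show Z * star x = star x * Z
      calc Z * star x = star Z * star x := by rw [hZ]
        _ = star (x * Z) := (star_mul x Z).symm
        _ = star (Z * x) := by rw [hx.eq]
        _ = star x * star Z := star_mul Z x
        _ = star x * Z := by rw [hZ]
  obtain ⟨r, hr⟩ := Matrix.mem_range_scalar_of_commute_single
      (fun i j _ => (key _).symm)
  refine ⟨r, ?_⟩
  rw [← hr]; ext i j
  simp [Matrix.scalar_apply, Matrix.one_apply, Matrix.diagonal_apply]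

/-- If the star algebra generated by two matrices is everything and `s > 1`, they
cannot commute. -/
lemma not_commute_of_gen {s : ℕ} (hs : 1 < s) {X Y : Mat s}
    (hX : star X = X) (hY : star Y = Y)
    (hgen : StarAlgebra.adjoin ℂ ({X, Y} : Set (Mat s)) = ⊤) :
    ¬ Commute X Y := by
  intro hc
  obtain ⟨x, hxX⟩ := scalar_of_commuting hgen hX (by rintro W (rfl | rfl); exacts [Commute.refl _, hc])
  obtain ⟨y, hyY⟩ := scalar_of_commuting hgen hY (by rintro W (rfl | rfl); exacts [hc.symm, Commute.refl _])
  set i0 : Fin s := ⟨0, by omega⟩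
  set i1 : Fin s := ⟨1, hs⟩
  have h01 : i0 ≠ i1 := by simp [i0, i1, Fin.ext_iff]
  set Z : Mat s := Matrix.single i0 i1 1 + Matrix.single i1 i0 1 with hZdef
  have hZsa : star Z = Z := by
    ext i j
    simp only [Z, Matrix.star_apply, Matrix.add_apply, Matrix.single]
    aesop
  obtain ⟨r, hr⟩ := scalar_of_commuting hgen hZsa (by
    rintro W (rfl | rfl)
    · rw [hxX]; exact (Commute.one_right Z).smul_right x
    · rw [hyY]; exact (Commute.one_right Z).smul_right y)
  have := congrFun (congrFun hr i0) i1
  simp [Z, Matrix.single, h01, Matrix.one_apply, h01.symm] at this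

/-- Lemma 3.4 (the dichotomy): if `s > 1` and equation (3.5) holds, then `b₁ b₂* = 0` and
either the off-diagonal or the diagonal entries of `𝔏` vanish. -/
theorem dichotomy {s : ℕ} (hs : 1 < s)
    (C1 C2 : Matrix (Fin s) (Fin s) ℂ) (hinv1 : IsUnit C1) (hinv2 : IsUnit C2)
    (hgen1 : StarAlgebra.adjoin ℂ ({C1ᴴ * C1, C2ᴴ * C2} : Set (Matrix (Fin s) (Fin s) ℂ)) = ⊤)
    (ℓ : Matrix (Fin 2) (Fin 2) ℂ) (hℓ : IsUnit ℓ) (b1 b2 : ℂ)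
    (heq : -((ℓ 0 0 * (starRingEnd ℂ) (ℓ 0 1)) • (C2⁻¹ * (C2ᴴ)⁻¹) +
          (ℓ 1 0 * (starRingEnd ℂ) (ℓ 1 1)) • (C1⁻¹ * (C1ᴴ)⁻¹)) =
        ((ℓ 0 0 * b2 - ℓ 1 0 * b1) * (starRingEnd ℂ) (-(ℓ 0 1 * b2) + ℓ 1 1 * b1)) •
          (1 : Matrix (Fin s) (Fin s) ℂ)) :
    b1 * (starRingEnd ℂ) b2 = 0 ∧
      ((ℓ 0 1 = 0 ∧ ℓ 1 0 = 0) ∨ (ℓ 0 0 = 0 ∧ ℓ 1 1 = 0)) := by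
  set X : Mat s := C1ᴴ * C1 with hXdef
  set Y : Mat s := C2ᴴ * C2 with hYdef
  set α : ℂ := ℓ 0 0 * (starRingEnd ℂ) (ℓ 0 1) with hαdef
  set β : ℂ := ℓ 1 0 * (starRingEnd ℂ) (ℓ 1 1) with hβdef
  set γ : ℂ := (ℓ 0 0 * b2 - ℓ 1 0 * b1) * (starRingEnd ℂ) (-(ℓ 0 1 * b2) + ℓ 1 1 * b1) with hγdef
  rw [← Matrix.mul_inv_rev, ← Matrix.mul_inv_rev] at heq
  have hXsa : star X = X := by
    simp [hXdef, Matrix.star_eq_conjTranspose, Matrix.conjTranspose_mul]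
  have hYsa : star Y = Y := by
    simp [hYdef, Matrix.star_eq_conjTranspose, Matrix.conjTranspose_mul]
  have hXu : IsUnit X := ((Matrix.isUnit_conjTranspose C1).mpr hinv1).mul hinv1
  have hYu : IsUnit Y := ((Matrix.isUnit_conjTranspose C2).mpr hinv2).mul hinv2
  have hXd : IsUnit X.det := (Matrix.isUnit_iff_isUnit_det X).mp hXu
  have hYd : IsUnit Y.det := (Matrix.isUnit_iff_isUnit_det Y).mp hYu
  have hnc : ¬ Commute X Y := not_commute_of_gen hs hXsa hYsa hgen1
  have hinvc : ¬ Commute X⁻¹ Y⁻¹ := by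
    intro hc
    apply hnc
    show X * Y = Y * X
    rw [← Matrix.nonsing_inv_nonsing_inv X hXd, ← Matrix.nonsing_inv_nonsing_inv Y hYd,
      ← Matrix.mul_inv_rev, ← hc.eq, Matrix.mul_inv_rev]
  -- α = 0
  have hα0 : α = 0 := by
    by_contra hα
    apply hinvc
    have h1 : α • Y⁻¹ = -(γ • (1 : Mat s)) - β • X⁻¹ := by
      rw [← heq]; abel
    have hc : Commute X⁻¹ (α • Y⁻¹) := by
      rw [h1]
      exact (((Commute.one_right X⁻¹).smul_right γ).neg_right).sub_right
        ((Commute.refl X⁻¹).smul_right β)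
    have := hc.eq
    rw [mul_smul_comm, smul_mul_assoc] at this
    exact smul_right_injective (Mat s) hα this
  have hβ0 : β = 0 := by
    by_contra hβ
    apply hinvc
    have h1 : β • X⁻¹ = -(γ • (1 : Mat s)) - α • Y⁻¹ := by
      rw [← heq]; abel
    have hc : Commute Y⁻¹ (β • X⁻¹) := by
      rw [h1]
      exact (((Commute.one_right Y⁻¹).smul_right γ).neg_right).sub_right
        ((Commute.refl Y⁻¹).smul_right α)
    have := hc.eq
    rw [mul_smul_comm, smul_mul_assoc] at this
    exact (smul_right_injective (Mat s) hβ this).symm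
  -- γ = 0
  haveI : NeZero s := ⟨by omega⟩
  have hγ0 : γ = 0 := by
    rw [hα0, hβ0] at heq
    simp only [zero_smul, add_zero, neg_zero] at heq
    rcases smul_eq_zero.mp heq.symm with h | h
    · exact h
    · exact absurd (congrFun (congrFun h ⟨0, by omega⟩) ⟨0, by omega⟩)
        (by simp [Matrix.one_apply])
  -- finish with scalar algebra
  have hdet : ℓ 0 0 * ℓ 1 1 - ℓ 0 1 * ℓ 1 0 ≠ 0 := by
    have := (Matrix.isUnit_iff_isUnit_det ℓ).mp hℓ
    rw [Matrix.det_fin_two] at this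
    exact this.ne_zero
  have conj_inj : ∀ z : ℂ, (starRingEnd ℂ) z = 0 → z = 0 := fun z h => by
    simpa using congrArg (starRingEnd ℂ) h
  rcases mul_eq_zero.mp hα0 with h00 | h01 <;> rcases mul_eq_zero.mp hβ0 with h10 | h11
  · -- ℓ00 = 0, ℓ10 = 0 : det = 0, contradiction
    exact absurd (by rw [h00, h10]; ring) hdet
  · -- ℓ00 = 0, conj ℓ11 = 0
    have h11' := conj_inj _ h11
    have h10' : ℓ 1 0 ≠ 0 := fun h => hdet (by rw [h00, h11', h]; ring)
    have h01' : ℓ 0 1 ≠ 0 := fun h => hdet (by rw [h00, h11', h]; ring)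
    refine ⟨?_, Or.inr ⟨h00, h11'⟩⟩
    have hγ' : ℓ 1 0 * (starRingEnd ℂ) (ℓ 0 1) * (b1 * (starRingEnd ℂ) b2) = 0 := by
      rw [← hγ0, hγdef, h00, h11']
      simp only [map_add, map_neg, map_mul, zero_mul, mul_zero, add_zero, zero_sub]
      ring
    rcases mul_eq_zero.mp hγ' with h | h
    · exact absurd h (mul_ne_zero h10' (fun hc => h01' (conj_inj _ hc)))
    · exact h
  · -- conj ℓ01 = 0, ℓ10 = 0
    have h01' := conj_inj _ h01
    have h00' : ℓ 0 0 ≠ 0 := fun h => hdet (by rw [h01', h10, h]; ring)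
    have h11' : ℓ 1 1 ≠ 0 := fun h => hdet (by rw [h01', h10, h]; ring)
    refine ⟨?_, Or.inl ⟨h01', h10⟩⟩
    have hγ' : ℓ 0 0 * (starRingEnd ℂ) (ℓ 1 1) * (b2 * (starRingEnd ℂ) b1) = 0 := by
      rw [← hγ0, hγdef, h01', h10]
      simp only [map_add, map_neg, map_mul, zero_mul, mul_zero, sub_zero, neg_zero, zero_add]
      ring
    rcases mul_eq_zero.mp hγ' with h | h
    · exact absurd h (mul_ne_zero h00' (fun hc => h11' (conj_inj _ hc)))
    · simpa [mul_comm] using congrArg (starRingEnd ℂ) h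
  · -- conj ℓ01 = 0, conj ℓ11 = 0 : det = 0
    exact absurd (by rw [conj_inj _ h01, conj_inj _ h11]; ring) hdet
end
end
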